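/- arXiv:1210.3181 — 3 statements merged into one kernel-verified Lean document; each statement's English description precedes it below -/
import Mathlib

section
/- Asymptotic continuity: let M be any set of measurements on a quantum system of Hilbert space dimension k, and let G be a set of states on that system which contains the maximally mixed state τ = I/k and is star-shaped with respect to τ (i.e. pσ + (1−p)τ ∈ G for all σ ∈ G and 0 ≤ p ≤ 1). If ρ, ρ' are states with ||ρ − ρ'||_M ≤ ε ≤ 1/e, then |E^{(G)}_{r,M}(ρ) − E^{(G)}_{r,M}(ρ')| ≤ 2ε log(6k/ε). -/
open Matrix Filter
open scoped Kronecker ENNReal Classical ComplexOrder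

noncomputable section

namespace QIT

/-- A (finite-dimensional) quantum state: positive semidefinite with unit trace. -/
def IsState {d : Type} [Fintype d] (ρ : Matrix d d ℂ) : Prop :=
  ρ.PosSemidef ∧ ρ.trace = 1

/-- Partial trace over the first tensor factor. -/
def ptrFst {X Y : Type} [Fintype X] (M : Matrix (X × Y) (X × Y) ℂ) : Matrix Y Y ℂ :=
  Matrix.of fun b b' => ∑ a, M (a, b) (a, b')

/-- Partial trace over the second tensor factor. -/
def ptrSnd {X Y : Type} [Fintype Y] (M : Matrix (X × Y) (X × Y) ℂ) : Matrix X X ℂ :=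
  Matrix.of fun a a' => ∑ b, M (a, b) (a', b)

/-- For a tripartite state on (A ⊗ B) ⊗ E, trace out the middle factor B, giving A ⊗ E. -/
def ptrMid {X Y Z : Type} [Fintype Y] (M : Matrix ((X × Y) × Z) ((X × Y) × Z) ℂ) :
    Matrix (X × Z) (X × Z) ℂ :=
  Matrix.of fun p q => ∑ b, M ((p.1, b), p.2) ((q.1, b), q.2)

/-- For a tripartite state on (A ⊗ B) ⊗ E, trace out the leftmost factor A, giving B ⊗ E. -/
def ptrLeft {X Y Z : Type} [Fintype X] (M : Matrix ((X × Y) × Z) ((X × Y) × Z) ℂ) :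
    Matrix (Y × Z) (Y × Z) ℂ :=
  Matrix.of fun p q => ∑ a, M ((a, p.1), p.2) ((a, q.1), q.2)

/-- Separable states on a bipartite system. -/
def IsSeparable {X Y : Type} [Fintype X] [Fintype Y]
    (σ : Matrix (X × Y) (X × Y) ℂ) : Prop :=
  ∃ (n : ℕ) (p : Fin n → ℝ) (ρ1 : Fin n → Matrix X X ℂ) (ρ2 : Fin n → Matrix Y Y ℂ),
    (∀ i, 0 ≤ p i) ∧ (∑ i, p i) = 1 ∧ (∀ i, IsState (ρ1 i)) ∧ (∀ i, IsState (ρ2 i)) ∧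
    σ = ∑ i, (p i : ℂ) • (ρ1 i ⊗ₖ ρ2 i)

/-- Matrix logarithm (base 2) of a Hermitian matrix via the spectral decomposition,
with the convention log 0 = 0 on the kernel; junk value 0 on non-Hermitian input. -/
def matLogb {d : Type} [Fintype d] [DecidableEq d] (A : Matrix d d ℂ) : Matrix d d ℂ :=
  if h : A.IsHermitian then
    (h.eigenvectorUnitary : Matrix d d ℂ) *
      Matrix.diagonal (fun i => ((Real.logb 2 (h.eigenvalues i) : ℝ) : ℂ)) *
      star (h.eigenvectorUnitary : Matrix d d ℂ)
  else 0

/-- Quantum relative entropy (base 2), +∞ if the support condition fails.  (For positive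
semidefinite `σ`, the condition `∀ v, σ v = 0 → ρ v = 0` on kernels is equivalent to
supp ρ ⊆ supp σ.) -/
def qRelEnt {d : Type} [Fintype d] [DecidableEq d] (ρ σ : Matrix d d ℂ) : ℝ≥0∞ :=
  if ∀ v : d → ℂ, σ.mulVec v = 0 → ρ.mulVec v = 0 then
    ENNReal.ofReal ((ρ * (matLogb ρ - matLogb σ)).trace.re)
  else ⊤

/-- Relative entropy of entanglement. -/
def Er {X Y : Type} [Fintype X] [DecidableEq X] [Fintype Y] [DecidableEq Y]
    (ρ : Matrix (X × Y) (X × Y) ℂ) : ℝ≥0∞ :=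
  ⨅ (σ : Matrix (X × Y) (X × Y) ℂ) (_ : IsSeparable σ), qRelEnt ρ σ

/-- n-fold tensor power of a bipartite state, arranged as a state on Aⁿ ⊗ Bⁿ. -/
def tpow {X Y : Type} (ρ : Matrix (X × Y) (X × Y) ℂ) (n : ℕ) :
    Matrix ((Fin n → X) × (Fin n → Y)) ((Fin n → X) × (Fin n → Y)) ℂ :=
  Matrix.of fun x y => ∏ i, ρ (x.1 i, x.2 i) (y.1 i, y.2 i)

/-- n-fold tensor power of a tripartite state on (A⊗B)⊗E, arranged on (Aⁿ⊗Bⁿ)⊗Eⁿ. -/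
def tpow3 {X Y Z : Type} (ρ : Matrix ((X × Y) × Z) ((X × Y) × Z) ℂ) (n : ℕ) :
    Matrix (((Fin n → X) × (Fin n → Y)) × (Fin n → Z))
           (((Fin n → X) × (Fin n → Y)) × (Fin n → Z)) ℂ :=
  Matrix.of fun u v => ∏ i, ρ ((u.1.1 i, u.1.2 i), u.2 i) ((v.1.1 i, v.1.2 i), v.2 i)

/-- Regularized relative entropy of entanglement. -/
def ErReg {X Y : Type} [Fintype X] [DecidableEq X] [Fintype Y] [DecidableEq Y]
    (ρ : Matrix (X × Y) (X × Y) ℂ) : ℝ≥0∞ :=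
  Filter.limsup (fun n : ℕ => Er (tpow ρ n) / (n : ℝ≥0∞)) Filter.atTop

/-- Classical relative entropy (base 2) of two finitely supported "probability vectors". -/
def klDiv2 {X : Type} [Fintype X] (P Q : X → ℝ) : ℝ≥0∞ :=
  if ∀ x, Q x = 0 → P x = 0 then
    ENNReal.ofReal (∑ x, P x * Real.logb 2 (P x / Q x))
  else ⊤

/-- Outcome distribution of a POVM on a state. -/
def mProb {d X : Type} [Fintype d] (M : X → Matrix d d ℂ) (ρ : Matrix d d ℂ) : X → ℝ :=
  fun x => ((ρ * M x).trace).re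

/-- POVM condition. -/
def IsPOVM {d X : Type} [Fintype d] [DecidableEq d] [Fintype X]
    (M : X → Matrix d d ℂ) : Prop :=
  (∀ x, (M x).PosSemidef) ∧ (∑ x, M x) = 1

/-- Conditions for a one-way (A→B) LOCC measurement with POVM elements R_k ⊗ S_{k,ℓ}. -/
def OneLOCCData {X Y : Type} [Fintype X] [DecidableEq X] [Fintype Y] [DecidableEq Y]
    {k l : ℕ} (R : Fin k → Matrix X X ℂ) (S : Fin k → Fin l → Matrix Y Y ℂ) : Prop :=
  (∀ i, (R i).PosSemidef) ∧ (∑ i, R i) = 1 ∧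
    (∀ i j, (S i j).PosSemidef) ∧ (∀ i, (∑ j, S i j) = 1)

/-- The POVM of a one-way LOCC measurement. -/
def oneLOCCPOVM {X Y : Type} {k l : ℕ} (R : Fin k → Matrix X X ℂ)
    (S : Fin k → Fin l → Matrix Y Y ℂ) : Fin k × Fin l → Matrix (X × Y) (X × Y) ℂ :=
  fun p => R p.1 ⊗ₖ S p.1 p.2

/-- One-way-LOCC restricted relative entropy of entanglement E_{r,1-LOCC}. -/
def ErOneLOCC {X Y : Type} [Fintype X] [DecidableEq X] [Fintype Y] [DecidableEq Y]
    (ρ : Matrix (X × Y) (X × Y) ℂ) : ℝ≥0∞ :=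
  ⨅ (σ : Matrix (X × Y) (X × Y) ℂ) (_ : IsSeparable σ),
    ⨆ (k : ℕ) (l : ℕ) (R : Fin k → Matrix X X ℂ) (S : Fin k → Fin l → Matrix Y Y ℂ)
      (_ : OneLOCCData R S),
      klDiv2 (mProb (oneLOCCPOVM R S) ρ) (mProb (oneLOCCPOVM R S) σ)

/-- Regularized E_{r,1-LOCC}. -/
def ErOneLOCCReg {X Y : Type} [Fintype X] [DecidableEq X] [Fintype Y] [DecidableEq Y]
    (ρ : Matrix (X × Y) (X × Y) ℂ) : ℝ≥0∞ :=
  Filter.limsup (fun n : ℕ => ErOneLOCC (tpow ρ n) / (n : ℝ≥0∞)) Filter.atTop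

/-- LO (product) restricted relative entropy of entanglement E_{r,LO}. -/
def ErLO {X Y : Type} [Fintype X] [DecidableEq X] [Fintype Y] [DecidableEq Y]
    (ρ : Matrix (X × Y) (X × Y) ℂ) : ℝ≥0∞ :=
  ⨅ (σ : Matrix (X × Y) (X × Y) ℂ) (_ : IsSeparable σ),
    ⨆ (k : ℕ) (l : ℕ) (R : Fin k → Matrix X X ℂ) (S : Fin l → Matrix Y Y ℂ)
      (_ : (∀ i, (R i).PosSemidef) ∧ (∑ i, R i) = 1 ∧
            (∀ j, (S j).PosSemidef) ∧ (∑ j, S j) = 1),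
      klDiv2 (mProb (fun p : Fin k × Fin l => R p.1 ⊗ₖ S p.2) ρ)
             (mProb (fun p : Fin k × Fin l => R p.1 ⊗ₖ S p.2) σ)

def ErLOReg {X Y : Type} [Fintype X] [DecidableEq X] [Fintype Y] [DecidableEq Y]
    (ρ : Matrix (X × Y) (X × Y) ℂ) : ℝ≥0∞ :=
  Filter.limsup (fun n : ℕ => ErLO (tpow ρ n) / (n : ℝ≥0∞)) Filter.atTop

/-- Families of pairs of local Kraus-operator products realizable by a finite-round
LOCC protocol (with two-way classical communication) on a bipartite system. -/
inductive LOCCFam (dA dB : Type) [Fintype dA] [DecidableEq dA] [Fintype dB] [DecidableEq dB] :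
    (dA' dB' X : Type) → (X → Matrix dA' dA ℂ) → (X → Matrix dB' dB ℂ) → Prop
  | base : LOCCFam dA dB dA dB PUnit (fun _ => 1) (fun _ => 1)
  | stepA {dA' dB' X : Type} {a : X → Matrix dA' dA ℂ} {b : X → Matrix dB' dB ℂ}
      (h : LOCCFam dA dB dA' dB' X a b)
      {dA'' K : Type} [Fintype dA'] [DecidableEq dA'] [Fintype dA''] [Fintype K]
      (κ : X → K → Matrix dA'' dA' ℂ)
      (hκ : ∀ x, (∑ j, (κ x j)ᴴ * κ x j) = (1 : Matrix dA' dA' ℂ)) :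
      LOCCFam dA dB dA'' dB' (X × K) (fun p => κ p.1 p.2 * a p.1) (fun p => b p.1)
  | stepB {dA' dB' X : Type} {a : X → Matrix dA' dA ℂ} {b : X → Matrix dB' dB ℂ}
      (h : LOCCFam dA dB dA' dB' X a b)
      {dB'' K : Type} [Fintype dB'] [DecidableEq dB'] [Fintype dB''] [Fintype K]
      (κ : X → K → Matrix dB'' dB' ℂ)
      (hκ : ∀ x, (∑ j, (κ x j)ᴴ * κ x j) = (1 : Matrix dB' dB' ℂ)) :
      LOCCFam dA dB dA' dB'' (X × K) (fun p => a p.1) (fun p => κ p.1 p.2 * b p.1)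
  | relabel {dA' dB' X : Type} {a : X → Matrix dA' dA ℂ} {b : X → Matrix dB' dB ℂ}
      (h : LOCCFam dA dB dA' dB' X a b) {Y : Type} (e : Y ≃ X) :
      LOCCFam dA dB dA' dB' Y (fun y => a (e y)) (fun y => b (e y))

/-- A POVM implementable by (two-way) LOCC: outcomes are coarse-grainings of the
histories of an LOCC protocol, with POVM elements (aᴴa) ⊗ (bᴴb). -/
def IsLOCCPOVM {X Y : Type} [Fintype X] [DecidableEq X] [Fintype Y] [DecidableEq Y]
    {m : ℕ} (M : Fin m → Matrix (X × Y) (X × Y) ℂ) : Prop :=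
  ∃ (p q n : ℕ) (a : Fin n → Matrix (Fin p) X ℂ) (b : Fin n → Matrix (Fin q) Y ℂ)
    (g : Fin n → Fin m),
    LOCCFam X Y (Fin p) (Fin q) (Fin n) a b ∧
    ∀ y, M y = ∑ x ∈ Finset.univ.filter (fun x => g x = y),
                  ((a x)ᴴ * a x) ⊗ₖ ((b x)ᴴ * b x)

/-- LOCC restricted relative entropy of entanglement E_{r,LOCC}. -/
def ErLOCC {X Y : Type} [Fintype X] [DecidableEq X] [Fintype Y] [DecidableEq Y]
    (ρ : Matrix (X × Y) (X × Y) ℂ) : ℝ≥0∞ :=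
  ⨅ (σ : Matrix (X × Y) (X × Y) ℂ) (_ : IsSeparable σ),
    ⨆ (m : ℕ) (M : Fin m → Matrix (X × Y) (X × Y) ℂ) (_ : IsLOCCPOVM M),
      klDiv2 (mProb M ρ) (mProb M σ)

def ErLOCCReg {X Y : Type} [Fintype X] [DecidableEq X] [Fintype Y] [DecidableEq Y]
    (ρ : Matrix (X × Y) (X × Y) ℂ) : ℝ≥0∞ :=
  Filter.limsup (fun n : ℕ => ErLOCC (tpow ρ n) / (n : ℝ≥0∞)) Filter.atTop

/-- Separable (positive) operator. -/
def IsSepOp {X Y : Type} [Fintype X] [Fintype Y] (Q : Matrix (X × Y) (X × Y) ℂ) : Prop :=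
  ∃ (n : ℕ) (a : Fin n → Matrix X X ℂ) (b : Fin n → Matrix Y Y ℂ),
    (∀ i, (a i).PosSemidef) ∧ (∀ i, (b i).PosSemidef) ∧ Q = ∑ i, a i ⊗ₖ b i

/-- SEP restricted relative entropy of entanglement E_{r,SEP}. -/
def ErSEP {X Y : Type} [Fintype X] [DecidableEq X] [Fintype Y] [DecidableEq Y]
    (ρ : Matrix (X × Y) (X × Y) ℂ) : ℝ≥0∞ :=
  ⨅ (σ : Matrix (X × Y) (X × Y) ℂ) (_ : IsSeparable σ),
    ⨆ (m : ℕ) (M : Fin m → Matrix (X × Y) (X × Y) ℂ)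
      (_ : IsPOVM M ∧ ∀ x, IsSepOp (M x)),
      klDiv2 (mProb M ρ) (mProb M σ)

def ErSEPReg {X Y : Type} [Fintype X] [DecidableEq X] [Fintype Y] [DecidableEq Y]
    (ρ : Matrix (X × Y) (X × Y) ℂ) : ℝ≥0∞ :=
  Filter.limsup (fun n : ℕ => ErSEP (tpow ρ n) / (n : ℝ≥0∞)) Filter.atTop

/-- Partial transpose on the first factor. -/
def ptranspose {X Y : Type} (Q : Matrix (X × Y) (X × Y) ℂ) : Matrix (X × Y) (X × Y) ℂ :=
  Matrix.of fun p q => Q (q.1, p.2) (p.1, q.2)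

/-- PPT restricted relative entropy of entanglement E_{r,PPT}. -/
def ErPPT {X Y : Type} [Fintype X] [DecidableEq X] [Fintype Y] [DecidableEq Y]
    (ρ : Matrix (X × Y) (X × Y) ℂ) : ℝ≥0∞ :=
  ⨅ (σ : Matrix (X × Y) (X × Y) ℂ) (_ : IsSeparable σ),
    ⨆ (m : ℕ) (M : Fin m → Matrix (X × Y) (X × Y) ℂ)
      (_ : IsPOVM M ∧ ∀ x, (ptranspose (M x)).PosSemidef),
      klDiv2 (mProb M ρ) (mProb M σ)

def ErPPTReg {X Y : Type} [Fintype X] [DecidableEq X] [Fintype Y] [DecidableEq Y]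
    (ρ : Matrix (X × Y) (X × Y) ℂ) : ℝ≥0∞ :=
  Filter.limsup (fun n : ℕ => ErPPT (tpow ρ n) / (n : ℝ≥0∞)) Filter.atTop

/-- Von Neumann entropy (base 2), via eigenvalues; junk value 0 on non-Hermitian input. -/
def vnEntropy {d : Type} [Fintype d] [DecidableEq d] (ρ : Matrix d d ℂ) : ℝ :=
  if h : ρ.IsHermitian then -∑ i, h.eigenvalues i * Real.logb 2 (h.eigenvalues i) else 0

/-- Quantum conditional mutual information I(A;B|E) of a state on (A⊗B)⊗E. -/
def qcmi {X Y Z : Type} [Fintype X] [DecidableEq X] [Fintype Y] [DecidableEq Y]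
    [Fintype Z] [DecidableEq Z] (ρ : Matrix ((X × Y) × Z) ((X × Y) × Z) ℂ) : ℝ :=
  vnEntropy (ptrMid ρ) + vnEntropy (ptrLeft ρ) - vnEntropy ρ - vnEntropy (ptrFst ρ)

/-- Squashed entanglement (infimum over finite-dimensional extensions). -/
def Esq {X Y : Type} [Fintype X] [DecidableEq X] [Fintype Y] [DecidableEq Y]
    (ρ : Matrix (X × Y) (X × Y) ℂ) : ℝ≥0∞ :=
  ⨅ (e : ℕ) (ω : Matrix ((X × Y) × Fin e) ((X × Y) × Fin e) ℂ)
    (_ : IsState ω ∧ ptrSnd ω = ρ),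
    ENNReal.ofReal (qcmi ω / 2)

/-- The classical extension Σ_i p_i ρ_i ⊗ |i⟩⟨i| of an ensemble. -/
def classExt {X Y : Type} {m : ℕ} (p : Fin m → ℝ)
    (ρi : Fin m → Matrix (X × Y) (X × Y) ℂ) :
    Matrix ((X × Y) × Fin m) ((X × Y) × Fin m) ℂ :=
  Matrix.of fun u v => if u.2 = v.2 then (p u.2 : ℂ) * ρi u.2 u.1 v.1 else 0

/-- c-squashed entanglement (infimum over classical extensions). -/
def Esqc {X Y : Type} [Fintype X] [DecidableEq X] [Fintype Y] [DecidableEq Y]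
    (ρ : Matrix (X × Y) (X × Y) ℂ) : ℝ≥0∞ :=
  ⨅ (m : ℕ) (p : Fin m → ℝ) (ρi : Fin m → Matrix (X × Y) (X × Y) ℂ)
    (_ : (∀ i, 0 ≤ p i) ∧ (∑ i, p i) = 1 ∧ (∀ i, IsState (ρi i)) ∧
          (∑ i, (p i : ℂ) • ρi i) = ρ),
    ENNReal.ofReal (qcmi (classExt p ρi) / 2)

def EsqcReg {X Y : Type} [Fintype X] [DecidableEq X] [Fintype Y] [DecidableEq Y]
    (ρ : Matrix (X × Y) (X × Y) ℂ) : ℝ≥0∞ :=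
  Filter.limsup (fun n : ℕ => Esqc (tpow ρ n) / (n : ℝ≥0∞)) Filter.atTop

/-- Mutual information I(X;Y) of a bipartite state. -/
def mutInfo {X Y : Type} [Fintype X] [DecidableEq X] [Fintype Y] [DecidableEq Y]
    (ρ : Matrix (X × Y) (X × Y) ℂ) : ℝ :=
  vnEntropy (ptrSnd ρ) + vnEntropy (ptrFst ρ) - vnEntropy ρ

/-- Marginal on A⊗B of a state on (A⊗A')⊗(B⊗B'). -/
def margMain {X Y : Type} {a b : ℕ}
    (ω : Matrix ((X × Fin a) × (Y × Fin b)) ((X × Fin a) × (Y × Fin b)) ℂ) :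
    Matrix (X × Y) (X × Y) ℂ :=
  Matrix.of fun p q => ∑ i, ∑ j, ω ((p.1, i), (p.2, j)) ((q.1, i), (q.2, j))

/-- Marginal on A'⊗B' of a state on (A⊗A')⊗(B⊗B'). -/
def margAux {X Y : Type} [Fintype X] [Fintype Y] {a b : ℕ}
    (ω : Matrix ((X × Fin a) × (Y × Fin b)) ((X × Fin a) × (Y × Fin b)) ℂ) :
    Matrix (Fin a × Fin b) (Fin a × Fin b) ℂ :=
  Matrix.of fun p q => ∑ x, ∑ y, ω ((x, p.1), (y, p.2)) ((x, q.1), (y, q.2))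

/-- Conditional entanglement of mutual information. -/
def EI {X Y : Type} [Fintype X] [DecidableEq X] [Fintype Y] [DecidableEq Y]
    (ρ : Matrix (X × Y) (X × Y) ℂ) : ℝ≥0∞ :=
  ⨅ (a : ℕ) (b : ℕ)
    (ω : Matrix ((X × Fin a) × (Y × Fin b)) ((X × Fin a) × (Y × Fin b)) ℂ)
    (_ : IsState ω ∧ margMain ω = ρ),
    ENNReal.ofReal ((mutInfo ω - mutInfo (margAux ω)) / 2)

/-- An LOCC quantum channel between bipartite systems. -/
def IsLOCCChannel {X Y X' Y' : Type} [Fintype X] [DecidableEq X] [Fintype Y] [DecidableEq Y]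
    [Fintype X'] [Fintype Y']
    (Λ : Matrix (X × Y) (X × Y) ℂ → Matrix (X' × Y') (X' × Y') ℂ) : Prop :=
  ∃ (n : ℕ) (a : Fin n → Matrix X' X ℂ) (b : Fin n → Matrix Y' Y ℂ),
    LOCCFam X Y X' Y' (Fin n) a b ∧
    ∀ ω, Λ ω = ∑ x, (a x ⊗ₖ b x) * ω * (a x ⊗ₖ b x)ᴴ

/-- E_{r,→}: the LOCC-processed one-way LOCC relative entropy of entanglement. -/
def ErArrow {X Y : Type} [Fintype X] [DecidableEq X] [Fintype Y] [DecidableEq Y]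
    (ρ : Matrix (X × Y) (X × Y) ℂ) : ℝ≥0∞ :=
  ⨆ (p : ℕ) (q : ℕ)
    (Λ : Matrix (X × Y) (X × Y) ℂ → Matrix (Fin p × Fin q) (Fin p × Fin q) ℂ)
    (_ : IsLOCCChannel Λ),
    ErOneLOCC (Λ ρ)

def ErArrowReg {X Y : Type} [Fintype X] [DecidableEq X] [Fintype Y] [DecidableEq Y]
    (ρ : Matrix (X × Y) (X × Y) ℂ) : ℝ≥0∞ :=
  Filter.limsup (fun n : ℕ => ErArrow (tpow ρ n) / (n : ℝ≥0∞)) Filter.atTop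

/-- Trace norm of a Hermitian matrix (junk value 0 on non-Hermitian input). -/
def traceNorm {d : Type} [Fintype d] [DecidableEq d] (M : Matrix d d ℂ) : ℝ :=
  if h : M.IsHermitian then ∑ i, |h.eigenvalues i| else 0

/-- The rank-d maximally entangled state Φ_d. -/
def MES (d : ℕ) : Matrix (Fin d × Fin d) (Fin d × Fin d) ℂ :=
  Matrix.of fun p q => if p.1 = p.2 ∧ q.1 = q.2 then ((d : ℂ))⁻¹ else 0

/-- Distillable entanglement. -/
def Ed {X Y : Type} [Fintype X] [DecidableEq X] [Fintype Y] [DecidableEq Y]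
    (ρ : Matrix (X × Y) (X × Y) ℂ) : ℝ≥0∞ :=
  ⨆ (dseq : ℕ → ℕ)
    (Λ : ∀ n : ℕ, Matrix ((Fin n → X) × (Fin n → Y)) ((Fin n → X) × (Fin n → Y)) ℂ →
          Matrix (Fin (dseq n) × Fin (dseq n)) (Fin (dseq n) × Fin (dseq n)) ℂ)
    (_ : (∀ n, IsLOCCChannel (Λ n)) ∧
         Filter.Tendsto (fun n => traceNorm (Λ n (tpow ρ n) - MES (dseq n)))
           Filter.atTop (nhds 0)),
    Filter.liminf (fun n : ℕ => ENNReal.ofReal (Real.logb 2 (dseq n)) / (n : ℝ≥0∞))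
      Filter.atTop

/-- A one-way LOCC (A→B) quantum instrument with classical output `Fin m` and quantum
output on B: Alice applies an instrument with outcomes k and Kraus operators A k i,
communicates k; Bob applies an instrument with classical outcome x and Kraus B k x j. -/
structure OneLOCCInstr (X Y : Type) [Fintype X] [DecidableEq X] [Fintype Y] [DecidableEq Y]
    (m : ℕ) where
  nK : ℕ
  nI : ℕ
  nJ : ℕ
  A : Fin nK → Fin nI → Matrix X X ℂ
  B : Fin nK → Fin m → Fin nJ → Matrix Y Y ℂ
  hA : (∑ k, ∑ i, (A k i)ᴴ * A k i) = 1
  hB : ∀ k, (∑ x, ∑ j, (B k x j)ᴴ * B k x j) = 1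

/-- The x-component of the instrument applied to a state of AB together with an
untouched environment E. -/
def OneLOCCInstr.comp {X Y Z : Type} [Fintype X] [DecidableEq X] [Fintype Y] [DecidableEq Y]
    [Fintype Z] [DecidableEq Z] {m : ℕ} (T : OneLOCCInstr X Y m) (x : Fin m)
    (ω : Matrix ((X × Y) × Z) ((X × Y) × Z) ℂ) : Matrix (Y × Z) (Y × Z) ℂ :=
  ∑ k, ∑ i, ∑ j,
    ptrLeft (((T.A k i ⊗ₖ T.B k x j) ⊗ₖ (1 : Matrix Z Z ℂ)) * ω *
             ((T.A k i ⊗ₖ T.B k x j) ⊗ₖ (1 : Matrix Z Z ℂ))ᴴ)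

/-- The classical output distribution T^c of the instrument on a state of AB. -/
def OneLOCCInstr.cOut {X Y : Type} [Fintype X] [DecidableEq X] [Fintype Y] [DecidableEq Y]
    {m : ℕ} (T : OneLOCCInstr X Y m) (ω : Matrix (X × Y) (X × Y) ℂ) : Fin m → ℝ :=
  fun x => (∑ k, ∑ i, ∑ j,
    ((T.A k i ⊗ₖ T.B k x j) * ω * (T.A k i ⊗ₖ T.B k x j)ᴴ).trace).re

/-- The quantum output T^q ⊗ id_E of the instrument on a state of (A⊗B)⊗E. -/
def OneLOCCInstr.qOut {X Y Z : Type} [Fintype X] [DecidableEq X] [Fintype Y] [DecidableEq Y]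
    [Fintype Z] [DecidableEq Z] {m : ℕ} (T : OneLOCCInstr X Y m)
    (ω : Matrix ((X × Y) × Z) ((X × Y) × Z) ℂ) : Matrix (Y × Z) (Y × Z) ℂ :=
  ∑ x, T.comp x ω

/-- The maximally mixed state. -/
def maxMixed (d : Type) [Fintype d] [DecidableEq d] : Matrix d d ℂ :=
  ((Fintype.card d : ℂ))⁻¹ • (1 : Matrix d d ℂ)

/-- Relative entropy of "entanglement" w.r.t. a set of states G and a set of
measurements Ms (measurements encoded as pairs of an outcome count and a POVM). -/
def ErG {d : Type} [Fintype d] [DecidableEq d]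
    (G : Set (Matrix d d ℂ)) (Ms : Set (Σ m : ℕ, Fin m → Matrix d d ℂ))
    (ρ : Matrix d d ℂ) : ℝ≥0∞ :=
  ⨅ (σ : Matrix d d ℂ) (_ : σ ∈ G),
    ⨆ (M : Σ m : ℕ, Fin m → Matrix d d ℂ) (_ : M ∈ Ms),
      klDiv2 (mProb M.2 ρ) (mProb M.2 σ)

/-- The distinguishability (pseudo-)norm ‖ρ−ρ'‖_Ms induced by a set of measurements. -/
def distMeas {d : Type} [Fintype d] [DecidableEq d]
    (Ms : Set (Σ m : ℕ, Fin m → Matrix d d ℂ)) (ρ ρ' : Matrix d d ℂ) : ℝ :=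
  ⨆ (M : Σ m : ℕ, Fin m → Matrix d d ℂ) (_ : M ∈ Ms),
    ∑ x, |mProb M.2 ρ x - mProb M.2 ρ' x|

/-- One-way LOCC distinguishability norm ‖ρ−ρ'‖_{1-LOCC}. -/
def oneLOCCDist {X Y : Type} [Fintype X] [DecidableEq X] [Fintype Y] [DecidableEq Y]
    (ρ ρ' : Matrix (X × Y) (X × Y) ℂ) : ℝ :=
  ⨆ (k : ℕ) (l : ℕ) (R : Fin k → Matrix X X ℂ) (S : Fin k → Fin l → Matrix Y Y ℂ)
    (_ : OneLOCCData R S),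
    ∑ p, |mProb (oneLOCCPOVM R S) ρ p - mProb (oneLOCCPOVM R S) ρ' p|

/-- Reindexing a tripartite system (A⊗B)⊗E into the bipartite split B : (A⊗E). -/
def splitBAE {X Y Z : Type} : (X × Y) × Z ≃ Y × (X × Z) where
  toFun := fun u => (u.1.2, (u.1.1, u.2))
  invFun := fun u => ((u.2.1, u.1), u.2.2)
  left_inv := fun _ => rfl
  right_inv := fun _ => rfl

/-- A tripartite state regarded as a bipartite state across B : AE. -/
def asBAE {X Y Z : Type} (ρ : Matrix ((X × Y) × Z) ((X × Y) × Z) ℂ) :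
    Matrix (Y × (X × Z)) (Y × (X × Z)) ℂ :=
  Matrix.reindex splitBAE splitBAE ρ

end QIT

open QIT

variable {dA dB dE : Type} [Fintype dA] [DecidableEq dA] [Fintype dB] [DecidableEq dB]
  [Fintype dE] [DecidableEq dE]

/- ===== Auxiliary lemmas for Proposition 3 ===== -/

section AuxProp3

open QIT

lemma aux_trace_conj_self {d : Type} [Fintype d] (E : Matrix d d ℂ) :
    (Eᴴ * E).trace = ((∑ i, ∑ j, Complex.normSq (E i j) : ℝ) : ℂ) := by
  simp only [Matrix.trace, Matrix.diag, Matrix.mul_apply, Matrix.conjTranspose_apply]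
  push_cast
  rw [Finset.sum_comm]
  congr 1; ext i; congr 1; ext j
  rw [Complex.normSq_eq_conj_mul_self]; rfl

lemma aux_trace_psd_mul_psd {d : Type} [Fintype d] [DecidableEq d] {A B : Matrix d d ℂ}
    (hA : A.PosSemidef) (hB : B.PosSemidef) :
    ∃ r : ℝ, 0 ≤ r ∧ (A * B).trace = (r : ℂ) := by
  obtain ⟨C, rfl⟩ : ∃ C : Matrix d d ℂ, A = Cᴴ * C := by
    open scoped MatrixOrder in exact CStarAlgebra.nonneg_iff_eq_star_mul_self.mp hA.nonneg
  obtain ⟨D, rfl⟩ : ∃ D : Matrix d d ℂ, B = Dᴴ * D := by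
    open scoped MatrixOrder in exact CStarAlgebra.nonneg_iff_eq_star_mul_self.mp hB.nonneg
  have h : (Cᴴ * C * (Dᴴ * D)).trace = ((D * Cᴴ)ᴴ * (D * Cᴴ)).trace := by
    rw [Matrix.conjTranspose_mul, Matrix.conjTranspose_conjTranspose]
    rw [show C * Dᴴ * (D * Cᴴ) = C * (Dᴴ * D) * Cᴴ by noncomm_ring,
      Matrix.trace_mul_cycle, Matrix.trace_mul_cycle (Dᴴ*D) Cᴴ C]
  rw [h, aux_trace_conj_self]
  exact ⟨_, Finset.sum_nonneg fun i _ => Finset.sum_nonneg fun j _ => Complex.normSq_nonneg _, rfl⟩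

lemma aux_trace_state_mul_le {d : Type} [Fintype d] [DecidableEq d] {ρ M : Matrix d d ℂ}
    (hρ : ρ.PosSemidef) (h1 : ρ.trace = 1) (hM : M.PosSemidef) :
    ((ρ * M).trace).re ≤ (M.trace).re := by
  obtain ⟨B, rfl⟩ : ∃ B : Matrix d d ℂ, ρ = Bᴴ * B := by
    open scoped MatrixOrder in exact CStarAlgebra.nonneg_iff_eq_star_mul_self.mp hρ.nonneg
  obtain ⟨D, rfl⟩ : ∃ D : Matrix d d ℂ, M = Dᴴ * D := by
    open scoped MatrixOrder in exact CStarAlgebra.nonneg_iff_eq_star_mul_self.mp hM.nonneg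
  have hB1 : (∑ i, ∑ j, Complex.normSq (B i j)) = 1 := by
    have := (aux_trace_conj_self B).symm.trans h1
    exact_mod_cast this
  have key : (Bᴴ * B * (Dᴴ * D)).trace = ((D * Bᴴ)ᴴ * (D * Bᴴ)).trace := by
    rw [Matrix.conjTranspose_mul, Matrix.conjTranspose_conjTranspose]
    rw [show B * Dᴴ * (D * Bᴴ) = B * (Dᴴ * D) * Bᴴ by noncomm_ring,
      Matrix.trace_mul_cycle, Matrix.trace_mul_cycle (Dᴴ*D) Bᴴ B]
  rw [key, aux_trace_conj_self, aux_trace_conj_self, Complex.ofReal_re, Complex.ofReal_re]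
  calc ∑ i, ∑ j, Complex.normSq ((D * Bᴴ) i j)
      ≤ ∑ i, ∑ j, (∑ l, Complex.normSq (D i l)) * (∑ l, Complex.normSq (B j l)) := by
        refine Finset.sum_le_sum fun i _ => Finset.sum_le_sum fun j _ => ?_
        rw [Matrix.mul_apply]
        calc Complex.normSq (∑ l, D i l * Bᴴ l j)
            = (‖(∑ l, D i l * Bᴴ l j)‖)^2 := (Complex.sq_norm _).symm
          _ ≤ (∑ l, ‖(D i l)‖ * ‖(Bᴴ l j)‖)^2 := by
              have h1 : ‖(∑ l, D i l * Bᴴ l j)‖ ≤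
                  ∑ l, ‖(D i l)‖ * ‖(Bᴴ l j)‖ := by
                refine (norm_sum_le _ _).trans ?_
                simp [norm_mul, le_refl]
              exact pow_le_pow_left₀ (norm_nonneg _) h1 2
          _ ≤ (∑ l, (‖(D i l)‖)^2) * (∑ l, (‖(Bᴴ l j)‖)^2) :=
              Finset.sum_mul_sq_le_sq_mul_sq _ _ _
          _ = (∑ l, Complex.normSq (D i l)) * (∑ l, Complex.normSq (B j l)) := by
              simp [Complex.sq_norm, Matrix.conjTranspose_apply, Complex.normSq_conj]
    _ = (∑ i, ∑ l, Complex.normSq (D i l)) * 1 := by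
        rw [← hB1]; rw [Finset.sum_mul]
        exact Finset.sum_congr rfl fun i _ => by rw [← Finset.mul_sum]
    _ = ∑ i, ∑ j, Complex.normSq (D i j) := by ring

lemma aux_logsum {ι : Type} (s : Finset ι) (a b : ι → ℝ) (ha : ∀ i ∈ s, 0 ≤ a i)
    (hb : ∀ i ∈ s, 0 ≤ b i) (h0 : ∀ i ∈ s, b i = 0 → a i = 0) :
    ∑ i ∈ s, a i * Real.log (b i / a i) ≤
      (∑ i ∈ s, a i) * Real.log ((∑ i ∈ s, b i) / (∑ i ∈ s, a i)) := by
  rcases eq_or_lt_of_le (Finset.sum_nonneg ha) with h | hApos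
  · have hz : ∀ i ∈ s, a i = 0 := (Finset.sum_eq_zero_iff_of_nonneg ha).mp h.symm
    rw [← h, zero_mul]
    rw [Finset.sum_congr rfl fun i hi => by rw [hz i hi, zero_mul]]
    simp
  · set A := ∑ i ∈ s, a i with hA
    set S := ∑ i ∈ s, b i with hS
    have hSpos : 0 < S := by
      rcases eq_or_lt_of_le (Finset.sum_nonneg hb) with h' | h'
      · exfalso
        have hbz : ∀ i ∈ s, b i = 0 := (Finset.sum_eq_zero_iff_of_nonneg hb).mp h'.symm
        have : A = 0 := Finset.sum_eq_zero fun i hi => h0 i hi (hbz i hi)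
        exact absurd this (ne_of_gt hApos)
      · exact h'
    have key : ∀ i ∈ s, a i * Real.log (b i / a i) ≤
        b i * A / S - a i + a i * Real.log (S / A) := by
      intro i hi
      rcases eq_or_lt_of_le (ha i hi) with hai | hai
      · rw [← hai, zero_mul, zero_mul, sub_zero, add_zero]
        exact div_nonneg (mul_nonneg (hb i hi) hApos.le) hSpos.le
      · have hbi : 0 < b i := by
          rcases eq_or_lt_of_le (hb i hi) with hbi | hbi
          · exact absurd (h0 i hi hbi.symm) (ne_of_gt hai)
          · exact hbi
        have hlog : Real.log (b i / a i) =
            Real.log ((b i * A) / (a i * S)) + Real.log (S / A) := by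
          rw [← Real.log_mul (by positivity) (by positivity)]
          congr 1
          field_simp
        rw [hlog, mul_add]
        have h1 : a i * Real.log ((b i * A) / (a i * S)) ≤ b i * A / S - a i := by
          have := Real.log_le_sub_one_of_pos (show 0 < (b i * A) / (a i * S) by positivity)
          calc a i * Real.log ((b i * A) / (a i * S)) ≤ a i * ((b i * A) / (a i * S) - 1) :=
                mul_le_mul_of_nonneg_left this (le_of_lt hai)
            _ = b i * A / S - a i := by field_simp
        linarith
    calc ∑ i ∈ s, a i * Real.log (b i / a i)
        ≤ ∑ i ∈ s, (b i * A / S - a i + a i * Real.log (S / A)) := Finset.sum_le_sum key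
      _ = S * A / S - A + A * Real.log (S / A) := by
          rw [Finset.sum_add_distrib, Finset.sum_sub_distrib, ← Finset.sum_mul,
            ← Finset.sum_div, ← Finset.sum_mul]
      _ = A * Real.log (S / A) := by field_simp; ring

lemma aux_neg_mul_log_mono {a b : ℝ} (ha : 0 ≤ a) (hab : a ≤ b) (hb : b ≤ (Real.exp 1)⁻¹) :
    a * Real.log (1 / a) ≤ b * Real.log (1 / b) := by
  rcases eq_or_lt_of_le ha with h | hapos
  · rw [← h, zero_mul]
    have hb0 : 0 ≤ b := le_trans ha hab
    rcases eq_or_lt_of_le hb0 with h' | h'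
    · rw [← h']; simp
    · have h1e : (Real.exp 1)⁻¹ ≤ 1 := by
        rw [inv_le_one_iff₀]; right; exact Real.one_le_exp zero_le_one
      have : (1:ℝ) ≤ 1 / b := by
        rw [le_div_iff₀ h', one_mul]; exact hb.trans h1e
      exact mul_nonneg (le_of_lt h') (Real.log_nonneg this)
  · have hbpos : 0 < b := lt_of_lt_of_le hapos hab
    have hlogb : 1 ≤ Real.log (1 / b) := by
      rw [one_div, Real.log_inv]
      have : Real.log b ≤ -1 := by
        calc Real.log b ≤ Real.log (Real.exp 1)⁻¹ := Real.log_le_log hbpos hb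
          _ = -1 := by rw [Real.log_inv, Real.log_exp]
      linarith
    have key : a * Real.log (1 / a) ≤ (b - a) + a * Real.log (1 / b) := by
      have hsplit : Real.log (1 / a) = Real.log (b / a) + Real.log (1 / b) := by
        rw [← Real.log_mul (by positivity) (by positivity)]
        congr 1
        field_simp
      rw [hsplit, mul_add]
      have : a * Real.log (b / a) ≤ b - a := by
        have := Real.log_le_sub_one_of_pos (show 0 < b / a by positivity)
        calc a * Real.log (b / a) ≤ a * (b / a - 1) := mul_le_mul_of_nonneg_left this ha
          _ = b - a := by field_simp
      linarith
    calc a * Real.log (1 / a) ≤ (b - a) + a * Real.log (1 / b) := key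
      _ ≤ (b - a) * Real.log (1 / b) + a * Real.log (1 / b) := by
          nlinarith [sub_nonneg.mpr hab]
      _ = b * Real.log (1 / b) := by ring

set_option maxHeartbeats 1000000 in
lemma core_classical {m : ℕ} (P P' Q' U : Fin m → ℝ) (ε k : ℝ)
    (hε : 0 < ε) (hεe : ε ≤ (Real.exp 1)⁻¹) (hk : 1 ≤ k)
    (hP0 : ∀ x, 0 ≤ P x) (hP'0 : ∀ x, 0 ≤ P' x) (hQ'0 : ∀ x, 0 ≤ Q' x)
    (hU0 : ∀ x, 0 ≤ U x)
    (hPU : ∀ x, P x ≤ k * U x) (hP'U : ∀ x, P' x ≤ k * U x)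
    (hP'1 : ∑ x, P' x = 1) (hQ'1 : ∑ x, Q' x = 1) (hU1 : ∑ x, U x = 1)
    (hdiff : ∑ x, |P x - P' x| ≤ ε)
    (hsupp : ∀ x, Q' x = 0 → P' x = 0) :
    (∀ x, (1+ε)⁻¹ * Q' x + (ε/(1+ε)) * U x = 0 → P x = 0) ∧
    ∑ x, P x * Real.log (P x / ((1+ε)⁻¹ * Q' x + (ε/(1+ε)) * U x)) ≤
      (∑ x, P' x * Real.log (P' x / Q' x)) + 2*ε*Real.log (6*k/ε) := by
  have hε1 : (0:ℝ) < 1 + ε := by linarith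
  have hεne : ε ≠ 0 := ne_of_gt hε
  have hε1ne : (1:ℝ) + ε ≠ 0 := ne_of_gt hε1
  set Q : Fin m → ℝ := fun x => (1+ε)⁻¹ * Q' x + (ε/(1+ε)) * U x with hQdef
  have hQ0 : ∀ x, 0 ≤ Q x := fun x => by
    have := hQ'0 x; have := hU0 x; positivity
  have hQzero : ∀ x, Q x = 0 → U x = 0 ∧ Q' x = 0 := by
    intro x hx
    have h1 : 0 ≤ (1+ε)⁻¹ * Q' x := by have := hQ'0 x; positivity
    have h2 : 0 ≤ (ε/(1+ε)) * U x := by have := hU0 x; positivity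
    have e1 : (1+ε)⁻¹ * Q' x = 0 := by simp only [hQdef] at hx; linarith
    have e2 : (ε/(1+ε)) * U x = 0 := by simp only [hQdef] at hx; linarith
    constructor
    · have : ε/(1+ε) ≠ 0 := by positivity
      exact (mul_eq_zero.mp e2).resolve_left this
    · have : (1+ε)⁻¹ ≠ 0 := by positivity
      exact (mul_eq_zero.mp e1).resolve_left this
  have hPzero : ∀ x, Q x = 0 → P x = 0 := by
    intro x hx
    have hU : U x = 0 := (hQzero x hx).1
    have := hPU x
    have := hP0 x
    nlinarith
  have hP'zero : ∀ x, U x = 0 → P' x = 0 := by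
    intro x hx
    have := hP'U x; have := hP'0 x; nlinarith
  refine ⟨hPzero, ?_⟩
  have hQlbU : ∀ x, (ε/(1+ε)) * U x ≤ Q x := fun x => by
    have := hQ'0 x
    simp only [hQdef]
    nlinarith [mul_nonneg (le_of_lt (inv_pos.mpr hε1)) (hQ'0 x)]
  have hQlbQ' : ∀ x, (1+ε)⁻¹ * Q' x ≤ Q x := fun x => by
    have h2 : 0 ≤ (ε/(1+ε)) * U x := by have := hU0 x; positivity
    simp only [hQdef]; linarith
  set K := (1+ε) * k / ε with hK
  have hK1 : 1 ≤ K := by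
    rw [hK, le_div_iff₀ hε]
    nlinarith
  set δp : Fin m → ℝ := fun x => max (P x - P' x) 0 with hδp
  set δm : Fin m → ℝ := fun x => max (P' x - P x) 0 with hδm
  have hδp0 : ∀ x, 0 ≤ δp x := fun x => le_max_right _ _
  have hδm0 : ∀ x, 0 ≤ δm x := fun x => le_max_right _ _
  -- pointwise step 1
  have step1 : ∀ x, P x * Real.log (P x / Q x) ≤ P' x * Real.log (P' x / Q x)
      + δp x * (Real.log K + 1) + δm x * Real.log (Q x / δm x) := by
    intro x
    rcases eq_or_lt_of_le (hU0 x) with hU | hU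
    · -- U x = 0
      have hPx : P x = 0 := by have := hPU x; have := hP0 x; nlinarith
      have hP'x : P' x = 0 := hP'zero x hU.symm
      have hδpx : δp x = 0 := by rw [hδp]; simp [hPx, hP'x]
      have hδmx : δm x = 0 := by rw [hδm]; simp [hPx, hP'x]
      simp [hPx, hP'x, hδpx, hδmx]
    · -- U x > 0
      have hQpos : 0 < Q x := lt_of_lt_of_le (by positivity) (hQlbU x)
      rcases le_or_gt (P' x) (P x) with hc | hc
      · -- case A
        have hδmx : δm x = 0 := by rw [hδm]; simp; linarith
        have hδpx : δp x = P x - P' x := by rw [hδp]; simp; linarith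
        rw [hδmx, zero_mul, add_zero, hδpx]
        rcases eq_or_lt_of_le (hP0 x) with hP | hP
        · have hP'x : P' x = 0 := by nlinarith [hP'0 x]
          rw [← hP, hP'x]; simp
        · -- P x > 0
          have hlogPQ : Real.log (P x / Q x) ≤ Real.log K := by
            apply Real.log_le_log (by positivity)
            rw [div_le_iff₀ hQpos]
            calc P x ≤ k * U x := hPU x
              _ = K * ((ε/(1+ε)) * U x) := by
                  rw [hK]
                  field_simp
              _ ≤ K * Q x := by
                  apply mul_le_mul_of_nonneg_left (hQlbU x)
                  linarith
          have hPP' : P x * Real.log (P x) - P' x * Real.log (P' x)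
              ≤ (P x - P' x) * (Real.log (P x) + 1) := by
            rcases eq_or_lt_of_le (hP'0 x) with hP' | hP'
            · rw [← hP']; simp; nlinarith
            · have hlsub := Real.log_le_sub_one_of_pos (show 0 < P x / P' x by positivity)
              have : P' x * Real.log (P x / P' x) ≤ P x - P' x := by
                calc P' x * Real.log (P x / P' x) ≤ P' x * (P x / P' x - 1) :=
                      mul_le_mul_of_nonneg_left hlsub (le_of_lt hP')
                  _ = P x - P' x := by field_simp
              rw [Real.log_div (ne_of_gt hP) (ne_of_gt hP')] at this
              nlinarith
          have expand : ∀ t : ℝ, 0 ≤ t → t * Real.log (t / Q x)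
              = t * Real.log t - t * Real.log (Q x) := by
            intro t ht
            rcases eq_or_lt_of_le ht with h | h
            · rw [← h]; simp
            · rw [Real.log_div (ne_of_gt h) (ne_of_gt hQpos)]; ring
          rw [expand _ (hP0 x), expand _ (hP'0 x)]
          have hfin : (P x - P' x) * (Real.log (P x) + 1) - (P x - P' x) * Real.log (Q x)
              = (P x - P' x) * (Real.log (P x / Q x) + 1) := by
            rw [Real.log_div (ne_of_gt hP) (ne_of_gt hQpos)]; ring
          have hmul : (P x - P' x) * (Real.log (P x / Q x) + 1)
              ≤ (P x - P' x) * (Real.log K + 1) := by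
            apply mul_le_mul_of_nonneg_left _ (by linarith)
            linarith
          linarith
      · -- case B
        have hδpx : δp x = 0 := by rw [hδp]; simp; linarith
        have hδmx : δm x = P' x - P x := by rw [hδm]; simp; linarith
        rw [hδpx, zero_mul, add_zero, hδmx]
        have hP'pos : 0 < P' x := lt_of_le_of_lt (hP0 x) hc
        have hδpos : 0 < P' x - P x := by linarith
        have expand : ∀ t : ℝ, 0 ≤ t → t * Real.log (t / Q x)
            = t * Real.log t - t * Real.log (Q x) := by
          intro t ht
          rcases eq_or_lt_of_le ht with h | h
          · rw [← h]; simp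
          · rw [Real.log_div (ne_of_gt h) (ne_of_gt hQpos)]; ring
        rw [expand _ (hP0 x), expand _ (hP'0 x)]
        have h1 : P x * Real.log (P x) ≤ P x * Real.log (P' x) := by
          rcases eq_or_lt_of_le (hP0 x) with h | h
          · rw [← h]; simp
          · exact mul_le_mul_of_nonneg_left (Real.log_le_log h (by linarith)) (hP0 x)
        have h2 : (P' x - P x) * Real.log (P' x - P x)
            ≤ (P' x - P x) * Real.log (P' x) := by
          exact mul_le_mul_of_nonneg_left (Real.log_le_log hδpos (by linarith [hP0 x])) (le_of_lt hδpos)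
        have goal' : Real.log (Q x / (P' x - P x)) = Real.log (Q x) - Real.log (P' x - P x) :=
          Real.log_div (ne_of_gt hQpos) (ne_of_gt hδpos)
        rw [goal']
        nlinarith [h1, h2]
  -- step 2
  have step2 : ∀ x, P' x * Real.log (P' x / Q x) ≤
      P' x * Real.log (P' x / Q' x) + P' x * Real.log (1+ε) := by
    intro x
    rcases eq_or_lt_of_le (hP'0 x) with h | h
    · rw [← h]; simp
    · have hQ'pos : 0 < Q' x := by
        rcases eq_or_lt_of_le (hQ'0 x) with h' | h'
        · exact absurd (hsupp x h'.symm) (ne_of_gt h)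
        · exact h'
      have hQpos : 0 < Q x := lt_of_lt_of_le (by positivity) (hQlbQ' x)
      have hle : P' x / Q x ≤ (P' x / Q' x) * (1+ε) := by
        rw [div_le_iff₀ hQpos]
        calc P' x = (P' x / Q' x)*(1+ε) * ((1+ε)⁻¹ * Q' x) := by field_simp
          _ ≤ (P' x / Q' x)*(1+ε) * Q x :=
              mul_le_mul_of_nonneg_left (hQlbQ' x) (by positivity)
      have hlog : Real.log (P' x / Q x) ≤ Real.log ((P' x / Q' x) * (1+ε)) :=
        Real.log_le_log (by positivity) hle
      rw [Real.log_mul (by positivity) (by positivity)] at hlog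
      nlinarith [hlog]
  have sumδp : ∑ x, δp x ≤ ε := by
    refine le_trans (Finset.sum_le_sum fun x _ => ?_) hdiff
    exact max_le (le_abs_self _) (abs_nonneg _)
  have sumδm : ∑ x, δm x ≤ ε := by
    refine le_trans (Finset.sum_le_sum fun x _ => ?_) hdiff
    rw [abs_sub_comm]
    exact max_le (le_abs_self _) (abs_nonneg _)
  have sumQ : ∑ x, Q x = 1 := by
    simp only [hQdef]
    rw [Finset.sum_add_distrib, ← Finset.mul_sum, ← Finset.mul_sum, hQ'1, hU1]
    field_simp
  have hlogsum : ∑ x, δm x * Real.log (Q x / δm x) ≤ ε * Real.log (1/ε) := by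
    have h1 := aux_logsum Finset.univ δm Q (fun x _ => hδm0 x) (fun x _ => hQ0 x)
      (fun x _ hQx => by
        have hU := (hQzero x hQx).1
        have hP' := hP'zero x hU
        simp only [hδm]
        simp [hP']
        exact hP0 x)
    rw [sumQ] at h1
    refine h1.trans ?_
    exact aux_neg_mul_log_mono (Finset.sum_nonneg fun x _ => hδm0 x) sumδm hεe
  have hlogK0 : 0 ≤ Real.log K := Real.log_nonneg hK1
  have hkne : k ≠ 0 := ne_of_gt (lt_of_lt_of_le one_pos hk)
  have hL1 : 1 ≤ -Real.log ε := by
    have : Real.log ε ≤ Real.log (Real.exp 1)⁻¹ := Real.log_le_log hε hεe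
    rw [Real.log_inv, Real.log_exp] at this
    linarith
  have hlog6 : (5:ℝ)/4 ≤ Real.log 6 := by
    rw [Real.le_log_iff_exp_le (by norm_num : (0:ℝ) < 6)]
    have h4 : Real.exp ((5:ℝ)/4) ^ (4:ℕ) = Real.exp 5 := by
      rw [← Real.exp_nat_mul]; norm_num
    have h5 : Real.exp (5:ℝ) = Real.exp 1 ^ (5:ℕ) := by
      rw [← Real.exp_nat_mul]; norm_num
    have hb : Real.exp 1 ^ (5:ℕ) ≤ 2.7182818286 ^ (5:ℕ) :=
      pow_le_pow_left₀ (Real.exp_pos 1).le Real.exp_one_lt_d9.le 5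
    refine le_of_pow_le_pow_left₀ (n := 4) (by norm_num) (by norm_num) ?_
    rw [h4, h5]
    calc Real.exp 1 ^ (5:ℕ) ≤ 2.7182818286 ^ (5:ℕ) := hb
      _ ≤ (6:ℝ) ^ (4:ℕ) := by norm_num
  have hεhalf : ε ≤ 1/2 := by
    have h2e : (2:ℝ) < Real.exp 1 := lt_trans (by norm_num) Real.exp_one_gt_d9
    have h2i : (Real.exp 1)⁻¹ ≤ (2:ℝ)⁻¹ := inv_anti₀ (by norm_num) h2e.le
    calc ε ≤ (Real.exp 1)⁻¹ := hεe
      _ ≤ (2:ℝ)⁻¹ := h2i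
      _ = 1/2 := by norm_num
  have hl1ε : Real.log (1+ε) ≤ ε := by
    have := Real.log_le_sub_one_of_pos hε1
    linarith
  have hlogKexp : Real.log K = Real.log (1+ε) + Real.log k - Real.log ε := by
    rw [hK, Real.log_div (mul_ne_zero hε1ne hkne) hεne, Real.log_mul hε1ne hkne]
  have hlog6k : Real.log (6*k/ε) = Real.log 6 + Real.log k - Real.log ε := by
    rw [Real.log_div (by positivity) hεne, Real.log_mul (by norm_num) hkne]
  have hlogk0 : 0 ≤ Real.log k := Real.log_nonneg hk
  calc ∑ x, P x * Real.log (P x / Q x)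
      ≤ ∑ x, (P' x * Real.log (P' x / Q x) + δp x * (Real.log K + 1)
        + δm x * Real.log (Q x / δm x)) := Finset.sum_le_sum fun x _ => step1 x
    _ = (∑ x, P' x * Real.log (P' x / Q x)) + (∑ x, δp x) * (Real.log K + 1)
        + ∑ x, δm x * Real.log (Q x / δm x) := by
        rw [Finset.sum_add_distrib, Finset.sum_add_distrib, Finset.sum_mul]
    _ ≤ ((∑ x, P' x * Real.log (P' x / Q' x)) + Real.log (1+ε))
        + ε * (Real.log K + 1) + ε * Real.log (1/ε) := by
        have t1 : ∑ x, P' x * Real.log (P' x / Q x)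
            ≤ (∑ x, P' x * Real.log (P' x / Q' x)) + Real.log (1+ε) := by
          calc ∑ x, P' x * Real.log (P' x / Q x)
              ≤ ∑ x, (P' x * Real.log (P' x / Q' x) + P' x * Real.log (1+ε)) :=
                Finset.sum_le_sum fun x _ => step2 x
            _ = (∑ x, P' x * Real.log (P' x / Q' x)) + Real.log (1+ε) := by
                rw [Finset.sum_add_distrib, ← Finset.sum_mul, hP'1, one_mul]
        have t2 : (∑ x, δp x) * (Real.log K + 1) ≤ ε * (Real.log K + 1) :=
          mul_le_mul_of_nonneg_right sumδp (by linarith)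
        exact add_le_add (add_le_add t1 t2) hlogsum
    _ ≤ (∑ x, P' x * Real.log (P' x / Q' x)) + 2*ε*Real.log (6*k/ε) := by
        rw [one_div, Real.log_inv, hlogKexp, hlog6k]
        nlinarith [mul_le_mul_of_nonneg_left hl1ε hε.le, mul_nonneg hε.le hlogk0,
          mul_le_mul_of_nonneg_left hεhalf hε.le, mul_le_mul_of_nonneg_left hL1 hε.le,
          mul_le_mul_of_nonneg_left hlog6 hε.le]


variable {d : Type} [Fintype d] [DecidableEq d]

lemma aux_mProb_nonneg {m : ℕ} {M : Fin m → Matrix d d ℂ} {ρ : Matrix d d ℂ}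
    (hρ : ρ.PosSemidef) (hM : ∀ x, (M x).PosSemidef) (x : Fin m) : 0 ≤ mProb M ρ x := by
  obtain ⟨r, hr, he⟩ := aux_trace_psd_mul_psd hρ (hM x)
  simp only [mProb, he, Complex.ofReal_re]
  exact hr

lemma aux_mProb_le {m : ℕ} {M : Fin m → Matrix d d ℂ} {ρ : Matrix d d ℂ}
    (hρ : IsState ρ) (hM : ∀ x, (M x).PosSemidef) (x : Fin m) :
    mProb M ρ x ≤ ((M x).trace).re :=
  aux_trace_state_mul_le hρ.1 hρ.2 (hM x)

lemma aux_mProb_sum {m : ℕ} {M : Fin m → Matrix d d ℂ} (hM : IsPOVM M)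
    {ρ : Matrix d d ℂ} (hρ : IsState ρ) : ∑ x, mProb M ρ x = 1 := by
  simp only [mProb]
  rw [← Complex.re_sum, ← Matrix.trace_sum, ← Finset.mul_sum, hM.2, mul_one, hρ.2]
  simp

lemma aux_traceM_sum {m : ℕ} {M : Fin m → Matrix d d ℂ} (hM : IsPOVM M) :
    ∑ x, ((M x).trace).re = (Fintype.card d : ℝ) := by
  rw [← Complex.re_sum, ← Matrix.trace_sum, hM.2, Matrix.trace_one]
  simp

lemma aux_mProb_mix {m : ℕ} (M : Fin m → Matrix d d ℂ) (σ : Matrix d d ℂ) (p : ℝ)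
    (x : Fin m) :
    mProb M ((p : ℂ) • σ + (((1 - p : ℝ)) : ℂ) • maxMixed d) x
      = p * mProb M σ x + (1-p) * ((Fintype.card d : ℝ)⁻¹ * ((M x).trace).re) := by
  simp only [mProb, maxMixed, Matrix.add_mul, Matrix.smul_mul, Matrix.one_mul,
    Matrix.trace_add, Matrix.trace_smul, smul_eq_mul, Complex.add_re]
  congr 1
  · rw [Complex.re_ofReal_mul]
  · rw [Complex.re_ofReal_mul, ← Complex.ofReal_natCast, ← Complex.ofReal_inv,
      Complex.re_ofReal_mul]

lemma aux_card_pos {ρ : Matrix d d ℂ} (hρ : IsState ρ) : 1 ≤ (Fintype.card d : ℝ) := by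
  have h : Fintype.card d ≠ 0 := by
    intro h
    haveI := Fintype.card_eq_zero_iff.mp h
    have h2 := hρ.2
    rw [Matrix.trace] at h2
    simp at h2
  exact_mod_cast Nat.one_le_iff_ne_zero.mpr h

lemma aux_ErG_one_sided (Ms : Set (Σ m : ℕ, Fin m → Matrix d d ℂ))
    (hMs : ∀ M ∈ Ms, IsPOVM M.2)
    (G : Set (Matrix d d ℂ)) (hG : ∀ σ ∈ G, IsState σ)
    (hstar : ∀ σ ∈ G, ∀ p : ℝ, 0 ≤ p → p ≤ 1 →
        ((p : ℂ) • σ + (((1 - p : ℝ)) : ℂ) • maxMixed d) ∈ G)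
    (ρ ρ' : Matrix d d ℂ) (hρ : IsState ρ) (hρ' : IsState ρ')
    (ε : ℝ) (hε0 : 0 < ε) (hεe : ε ≤ (Real.exp 1)⁻¹)
    (hdiff : ∀ M ∈ Ms, ∑ x, |mProb M.2 ρ x - mProb M.2 ρ' x| ≤ ε) :
    ErG G Ms ρ ≤ ErG G Ms ρ' +
      ENNReal.ofReal (2 * ε * Real.logb 2 (6 * (Fintype.card d : ℝ) / ε)) := by
  set k : ℝ := (Fintype.card d : ℝ) with hkdef
  have hk : 1 ≤ k := aux_card_pos hρ
  have hε1 : (0:ℝ) < 1 + ε := by linarith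
  set c := ENNReal.ofReal (2 * ε * Real.logb 2 (6 * k / ε)) with hc
  unfold ErG
  rw [ENNReal.iInf_add]
  refine le_iInf fun σ' => ?_
  rw [ENNReal.iInf_add]
  refine le_iInf fun hσ' => ?_
  have hp0 : (0:ℝ) ≤ (1+ε)⁻¹ := by positivity
  have hp1 : ((1+ε):ℝ)⁻¹ ≤ 1 := by
    rw [inv_le_one_iff₀]; right; linarith
  have hσG := hstar σ' hσ' ((1+ε)⁻¹) hp0 hp1
  refine iInf₂_le_of_le _ hσG (iSup₂_le fun M hM => ?_)
  refine le_trans ?_ (add_le_add_left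
    (le_iSup₂ (f := fun (M : Σ m : ℕ, Fin m → Matrix d d ℂ) (_ : M ∈ Ms) =>
      klDiv2 (mProb M.2 ρ') (mProb M.2 σ')) M hM) c)
  -- now the per-measurement inequality
  have hPOVM := hMs M hM
  have hσ'state := hG σ' hσ'
  set P := mProb M.2 ρ with hP
  set P' := mProb M.2 ρ' with hP'
  set Q' := mProb M.2 σ' with hQ'
  set U : Fin M.1 → ℝ := fun x => k⁻¹ * ((M.2 x).trace).re with hU
  have hQfun : mProb M.2 (((((1+ε)⁻¹ : ℝ)) : ℂ) • σ'
      + (((1 - (1+ε)⁻¹ : ℝ)) : ℂ) • maxMixed d) = fun x =>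
      (1+ε)⁻¹ * Q' x + (ε/(1+ε)) * U x := by
    funext x
    rw [aux_mProb_mix M.2 σ' ((1+ε)⁻¹) x]
    have : 1 - ((1+ε):ℝ)⁻¹ = ε/(1+ε) := by field_simp; ring
    rw [this, hU]
  have core := core_classical P P' Q' U ε k hε0 hεe hk
    (aux_mProb_nonneg hρ.1 hPOVM.1)
    (aux_mProb_nonneg hρ'.1 hPOVM.1)
    (aux_mProb_nonneg hσ'state.1 hPOVM.1)
    (fun x => by
      rw [hU]
      have h0 : 0 ≤ ((M.2 x).trace).re := by
        obtain ⟨r, hr, he⟩ := aux_trace_psd_mul_psd (Matrix.PosSemidef.one) (hPOVM.1 x)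
        rw [Matrix.one_mul] at he
        rw [he, Complex.ofReal_re]
        exact hr
      positivity)
    (fun x => by
      rw [hU]
      have : k * (k⁻¹ * ((M.2 x).trace).re) = ((M.2 x).trace).re := by
        field_simp
      rw [this]
      exact aux_mProb_le hρ hPOVM.1 x)
    (fun x => by
      rw [hU]
      have : k * (k⁻¹ * ((M.2 x).trace).re) = ((M.2 x).trace).re := by
        field_simp
      rw [this]
      exact aux_mProb_le hρ' hPOVM.1 x)
    (aux_mProb_sum hPOVM hρ')
    (aux_mProb_sum hPOVM hσ'state)
    (by
      rw [hU]
      rw [← Finset.mul_sum, aux_traceM_sum hPOVM, ← hkdef]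
      field_simp)
    (hdiff M hM)
  rcases Classical.em (∀ x, Q' x = 0 → P' x = 0) with hsupp | hsupp
  · obtain ⟨hsQ, hineq⟩ := core hsupp
    rw [hQfun]
    simp only [klDiv2]
    rw [if_pos hsQ, if_pos hsupp]
    refine le_trans (ENNReal.ofReal_le_ofReal ?_) (ENNReal.ofReal_add_le)
    have hlog2 : (0:ℝ) < Real.log 2 := Real.log_pos (by norm_num)
    have e1 : ∑ x, P x * Real.logb 2 (P x / ((1+ε)⁻¹ * Q' x + (ε/(1+ε)) * U x))
        = (∑ x, P x * Real.log (P x / ((1+ε)⁻¹ * Q' x + (ε/(1+ε)) * U x))) / Real.log 2 := by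
      rw [Finset.sum_div]
      exact Finset.sum_congr rfl fun x _ => by rw [Real.logb, mul_div_assoc]
    have e2 : ∑ x, P' x * Real.logb 2 (P' x / Q' x)
        = (∑ x, P' x * Real.log (P' x / Q' x)) / Real.log 2 := by
      rw [Finset.sum_div]
      exact Finset.sum_congr rfl fun x _ => by rw [Real.logb, mul_div_assoc]
    have e3 : 2 * ε * Real.logb 2 (6 * k / ε) = (2 * ε * Real.log (6 * k / ε)) / Real.log 2 := by
      rw [Real.logb]; ring
    rw [e1, e2, e3, ← add_div]
    gcongr
  · rw [show klDiv2 P' Q' = ⊤ from if_neg hsupp]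
    rw [top_add]
    exact le_top

end AuxProp3


/-- **Proposition 3** (asymptotic continuity of E^{(G)}_{r,M}). -/
theorem ErG_asymptotic_continuity {d : Type} [Fintype d] [DecidableEq d]
    (Ms : Set (Σ m : ℕ, Fin m → Matrix d d ℂ)) (hMs : ∀ M ∈ Ms, IsPOVM M.2)
    (G : Set (Matrix d d ℂ)) (hG : ∀ σ ∈ G, IsState σ)
    (hτ : maxMixed d ∈ G)
    (hstar : ∀ σ ∈ G, ∀ p : ℝ, 0 ≤ p → p ≤ 1 →
        ((p : ℂ) • σ + (((1 - p : ℝ)) : ℂ) • maxMixed d) ∈ G)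
    (ρ ρ' : Matrix d d ℂ) (hρ : IsState ρ) (hρ' : IsState ρ')
    (ε : ℝ) (hdist : distMeas Ms ρ ρ' ≤ ε) (hε : ε ≤ (Real.exp 1)⁻¹) :
    ErG G Ms ρ ≤ ErG G Ms ρ' +
        ENNReal.ofReal (2 * ε * Real.logb 2 (6 * (Fintype.card d : ℝ) / ε)) ∧
    ErG G Ms ρ' ≤ ErG G Ms ρ +
        ENNReal.ofReal (2 * ε * Real.logb 2 (6 * (Fintype.card d : ℝ) / ε)) := by
  classical
  have hnn : 0 ≤ distMeas Ms ρ ρ' :=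
    Real.iSup_nonneg fun M => Real.iSup_nonneg fun _ =>
      Finset.sum_nonneg fun x _ => abs_nonneg _
  have hdiffM : ∀ M ∈ Ms, ∑ x, |mProb M.2 ρ x - mProb M.2 ρ' x| ≤ ε := by
    intro M hM
    refine le_trans ?_ hdist
    have hb : ∀ M' : (Σ m : ℕ, Fin m → Matrix d d ℂ),
        (⨆ (_ : M' ∈ Ms), ∑ x, |mProb M'.2 ρ x - mProb M'.2 ρ' x|) ≤ 2 := by
      intro M'
      refine Real.iSup_le (fun hM' => ?_) (by norm_num)
      have h1 := aux_mProb_sum (hMs M' hM') hρ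
      have h2 := aux_mProb_sum (hMs M' hM') hρ'
      calc ∑ x, |mProb M'.2 ρ x - mProb M'.2 ρ' x|
          ≤ ∑ x, (mProb M'.2 ρ x + mProb M'.2 ρ' x) := by
            refine Finset.sum_le_sum fun x _ => ?_
            have ha := aux_mProb_nonneg hρ.1 (hMs M' hM').1 (M := M'.2) x
            have hb' := aux_mProb_nonneg hρ'.1 (hMs M' hM').1 (M := M'.2) x
            exact abs_le.mpr ⟨by linarith, by linarith⟩
        _ = 2 := by rw [Finset.sum_add_distrib, h1, h2]; norm_num
    have hbdd : BddAbove (Set.range fun M' : (Σ m : ℕ, Fin m → Matrix d d ℂ) =>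
        ⨆ (_ : M' ∈ Ms), ∑ x, |mProb M'.2 ρ x - mProb M'.2 ρ' x|) := by
      refine ⟨2, ?_⟩
      rintro _ ⟨M', rfl⟩
      exact hb M'
    calc (∑ x, |mProb M.2 ρ x - mProb M.2 ρ' x|)
        = ⨆ (_ : M ∈ Ms), ∑ x, |mProb M.2 ρ x - mProb M.2 ρ' x| :=
          (ciSup_pos (f := fun _ : M ∈ Ms => ∑ x, |mProb M.2 ρ x - mProb M.2 ρ' x|) hM).symm
      _ ≤ distMeas Ms ρ ρ' := le_ciSup hbdd M
  have hε0 : 0 ≤ ε := le_trans hnn hdist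
  rcases eq_or_lt_of_le hε0 with hez | hpos
  · -- ε = 0 : the measured distributions coincide
    have hPP : ∀ M ∈ Ms, mProb M.2 ρ = mProb M.2 ρ' := by
      intro M hM
      funext x
      have h := hdiffM M hM
      rw [← hez] at h
      have hs := Finset.single_le_sum
        (f := fun y => |mProb M.2 ρ y - mProb M.2 ρ' y|)
        (fun y _ => abs_nonneg _) (Finset.mem_univ x)
      have h0 : |mProb M.2 ρ x - mProb M.2 ρ' x| = 0 :=
        le_antisymm (by linarith) (abs_nonneg _)
      rw [abs_eq_zero, sub_eq_zero] at h0
      exact h0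
    have hEq : ErG G Ms ρ = ErG G Ms ρ' := by
      unfold ErG
      exact iInf_congr fun σ => iInf_congr fun hσ => iSup_congr fun M =>
        iSup_congr fun hM => by rw [hPP M hM]
    constructor
    · rw [hEq]; exact self_le_add_right _ _
    · rw [hEq]; exact self_le_add_right _ _
  · refine ⟨aux_ErG_one_sided Ms hMs G hG hstar ρ ρ' hρ hρ' ε hpos hε hdiffM,
      aux_ErG_one_sided Ms hMs G hG hstar ρ' ρ hρ' hρ ε hpos hε ?_⟩
    intro M hM
    calc ∑ x, |mProb M.2 ρ' x - mProb M.2 ρ x|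
        = ∑ x, |mProb M.2 ρ x - mProb M.2 ρ' x| :=
          Finset.sum_congr rfl fun x _ => abs_sub_comm _ _
      _ ≤ ε := hdiffM M hM
end
end

section
/- Let ρ, ρ', σ be states on a quantum system of Hilbert space dimension k such that σ ≥ (ε/k)·I (i.e. the smallest eigenvalue of σ is at least ε/k), and let M be a POVM with measurement map M such that ||M(ρ) − M(ρ')||_1 ≤ ε ≤ 1/e. Then |D(M(ρ)||M(σ)) − D(M(ρ')||M(σ))| ≤ 2ε log(3k/ε). -/
open Matrix Filter
open scoped Kronecker ENNReal Classical ComplexOrder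

noncomputable section

open QIT

variable {dA dB dE : Type} [Fintype dA] [DecidableEq dA] [Fintype dB] [DecidableEq dB]
  [Fintype dE] [DecidableEq dE]



private lemma log_three_ge_one : (1:ℝ) ≤ Real.log 3 := by
  rw [Real.le_log_iff_exp_le (by norm_num)]
  linarith [Real.exp_one_lt_d9]

section
variable {p p' q ε c : ℝ}

private lemma eps_le_one (hε : 0 < ε) (hεe : ε ≤ (Real.exp 1)⁻¹) : ε ≤ 1 := by
  have h2 : (2:ℝ) ≤ Real.exp 1 := by linarith [Real.add_one_le_exp 1]
  have h3 : ε * Real.exp 1 ≤ (Real.exp 1)⁻¹ * Real.exp 1 :=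
    mul_le_mul_of_nonneg_right hεe (Real.exp_pos 1).le
  rw [inv_mul_cancel₀ (ne_of_gt (Real.exp_pos 1))] at h3
  nlinarith

private lemma exp_le_inv_eps (hε : 0 < ε) (hεe : ε ≤ (Real.exp 1)⁻¹) : Real.exp 1 ≤ ε⁻¹ := by
  rw [le_inv_comm₀ (Real.exp_pos 1) hε]
  exact hεe

private lemma perx (hp : 0 ≤ p) (hp' : 0 ≤ p')
    (hpq : p ≤ c * q) (hp'q : p' ≤ c * q) (hε : 0 < ε)
    (hεe : ε ≤ (Real.exp 1)⁻¹) (hc : 1/ε ≤ c) :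
    p * Real.log (p/q) - p' * Real.log (p'/q) ≤
      |p - p'| * Real.log (3*c) + ε*q + max (p' - p) 0 * (Real.log (1/ε) - 1) := by
  have hc0 : 0 < c := lt_of_lt_of_le (by positivity) hc
  have hq : 0 ≤ q := nonneg_of_mul_nonneg_right (le_trans hp hpq) hc0
  have h1c : 1 ≤ c := le_trans (by rw [le_div_iff₀ hε]; nlinarith [eps_le_one hε hεe]) hc
  have hlog3c : 0 ≤ Real.log (3*c) := Real.log_nonneg (by linarith)
  have hlogeps : 1 ≤ Real.log (1/ε) := by
    rw [one_div, Real.le_log_iff_exp_le (by positivity)]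
    exact exp_le_inv_eps hε hεe
  rcases lt_trichotomy p p' with hlt | heq | hgt
  · -- p < p'
    have hs : 0 < p' - p := by linarith
    have hq0 : 0 < q := by nlinarith
    have habs : |p - p'| = p' - p := by rw [abs_sub_comm]; exact abs_of_pos hs
    have hmax : max (p' - p) 0 = p' - p := max_eq_left (le_of_lt hs)
    have step1 : p * Real.log (p/q) - p' * Real.log (p'/q) ≤ (p'-p) * Real.log (q/(p'-p)) := by
      have hp'0 : 0 < p' := by linarith
      rcases eq_or_lt_of_le hp with hpz | hppos
      · -- p = 0
        rw [← hpz, sub_zero]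
        simp only [zero_mul, zero_div, zero_sub]
        rw [Real.log_div (ne_of_gt hp'0) (ne_of_gt hq0),
            Real.log_div (ne_of_gt hq0) (ne_of_gt hp'0)]
        ring_nf
        linarith
      · have hid : p * Real.log (p/q) - p' * Real.log (p'/q)
            = (p'-p) * Real.log (q/p') - p * Real.log (p'/p) := by
          rw [Real.log_div (ne_of_gt hppos) (ne_of_gt hq0),
              Real.log_div (ne_of_gt hp'0) (ne_of_gt hq0),
              Real.log_div (ne_of_gt hq0) (ne_of_gt hp'0),
              Real.log_div (ne_of_gt hp'0) (ne_of_gt hppos)]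
          ring
        rw [hid]
        have h1 : 0 ≤ Real.log (p'/p) := Real.log_nonneg ((one_le_div hppos).mpr (le_of_lt hlt))
        have h2 : Real.log (q/p') ≤ Real.log (q/(p'-p)) :=
          Real.log_le_log (by positivity) (div_le_div_of_nonneg_left hq hs (by linarith))
        nlinarith
    have step2 : (p'-p) * Real.log (q/(p'-p)) ≤ ε*q + (p'-p) * (Real.log (1/ε) - 1) := by
      have h3 : Real.log (q/(p'-p)) = Real.log (ε*q/(p'-p)) + Real.log (1/ε) := by
        rw [Real.log_div (by positivity) (ne_of_gt hs), Real.log_div (by positivity) (ne_of_gt hs),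
            Real.log_mul (ne_of_gt hε) (ne_of_gt hq0), Real.log_div one_ne_zero (ne_of_gt hε),
            Real.log_one]
        ring
      have h4 : Real.log (ε*q/(p'-p)) ≤ ε*q/(p'-p) - 1 :=
        Real.log_le_sub_one_of_pos (by positivity)
      have h5 : (p'-p) * (ε*q/(p'-p)) = ε*q := by field_simp
      nlinarith
    rw [habs, hmax]
    nlinarith
  · -- p = p'
    rw [heq]
    simp only [sub_self, abs_zero, zero_mul, max_self, zero_add, add_zero]
    positivity
  · -- p' < p
    have ht : 0 < p - p' := by linarith
    have hp0 : 0 < p := by linarith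
    have hq0 : 0 < q := by nlinarith
    have habs : |p - p'| = p - p' := abs_of_pos ht
    have hmax : max (p' - p) 0 = 0 := max_eq_right (by linarith)
    have hlogpq : Real.log (p/q) ≤ Real.log c :=
      Real.log_le_log (by positivity) ((div_le_iff₀ hq0).mpr (by linarith))
    have hmain : p * Real.log (p/q) - p' * Real.log (p'/q) ≤ (p - p') * Real.log (3*c) := by
      have hlog3 : Real.log (3*c) = Real.log 3 + Real.log c :=
        Real.log_mul (by norm_num) (ne_of_gt hc0)
      rcases eq_or_lt_of_le hp' with hpz | hppos
      · rw [← hpz]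
        simp only [zero_mul, sub_zero]
        calc p * Real.log (p/q) ≤ p * Real.log c :=
              mul_le_mul_of_nonneg_left hlogpq hp
          _ ≤ p * Real.log (3*c) := by
              rw [hlog3]; nlinarith [log_three_ge_one]
      · have hid : p * Real.log (p/q) - p' * Real.log (p'/q)
            = (p - p') * Real.log (p/q) + p' * Real.log (p/p') := by
          rw [Real.log_div (ne_of_gt hp0) (ne_of_gt hq0),
              Real.log_div (ne_of_gt hppos) (ne_of_gt hq0),
              Real.log_div (ne_of_gt hp0) (ne_of_gt hppos)]
          ring
        rw [hid]
        have h1 : Real.log (p/p') ≤ p/p' - 1 := Real.log_le_sub_one_of_pos (by positivity)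
        have h2 : p' * (p/p' - 1) = p - p' := by field_simp
        have h3 : p' * Real.log (p/p') ≤ p - p' := by nlinarith
        have h4 : (p - p') * Real.log (p/q) ≤ (p - p') * Real.log c :=
          mul_le_mul_of_nonneg_left hlogpq (le_of_lt ht)
        rw [hlog3]
        nlinarith [log_three_ge_one]
    rw [habs, hmax, zero_mul, add_zero]
    linarith [hmain, mul_nonneg hε.le hq]
end

private lemma core {X : Type} [Fintype X] (P P' Q : X → ℝ) (ε c : ℝ)
    (hP : ∀ x, 0 ≤ P x) (hP' : ∀ x, 0 ≤ P' x)
    (hPQ : ∀ x, P x ≤ c * Q x) (hP'Q : ∀ x, P' x ≤ c * Q x)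
    (hQ1 : ∑ x, Q x = 1) (hdist : ∑ x, |P x - P' x| ≤ ε)
    (hε : 0 < ε) (hεe : ε ≤ (Real.exp 1)⁻¹) (hc : 1/ε ≤ c) :
    ∑ x, P x * Real.log (P x / Q x) - ∑ x, P' x * Real.log (P' x / Q x)
      ≤ 2 * ε * Real.log (3*c) := by
  have hc0 : 0 < c := lt_of_lt_of_le (by positivity) hc
  have h1c : 1 ≤ c := le_trans (by rw [le_div_iff₀ hε]; nlinarith [eps_le_one hε hεe]) hc
  have hlog3c : 0 ≤ Real.log (3*c) := Real.log_nonneg (by linarith)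
  have hlogeps : 1 ≤ Real.log (1/ε) := by
    rw [one_div, Real.le_log_iff_exp_le (by positivity)]
    exact exp_le_inv_eps hε hεe
  have hsum : ∑ x, (P x * Real.log (P x / Q x) - P' x * Real.log (P' x / Q x)) ≤
      ∑ x, (|P x - P' x| * Real.log (3*c) + ε * Q x
        + max (P' x - P x) 0 * (Real.log (1/ε) - 1)) :=
    Finset.sum_le_sum fun x _ =>
      perx (hP x) (hP' x) (hPQ x) (hP'Q x) hε hεe hc
  rw [Finset.sum_sub_distrib] at hsum
  refine le_trans hsum ?_
  rw [Finset.sum_add_distrib, Finset.sum_add_distrib, ← Finset.sum_mul, ← Finset.mul_sum,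
    ← Finset.sum_mul, hQ1, mul_one]
  have h1 : (∑ x, |P x - P' x|) * Real.log (3*c) ≤ ε * Real.log (3*c) :=
    mul_le_mul_of_nonneg_right hdist hlog3c
  have h2 : (∑ x, max (P' x - P x) 0) ≤ ε := by
    refine le_trans (Finset.sum_le_sum fun x _ => ?_) hdist
    rw [abs_sub_comm]
    exact max_le (le_abs_self _) (abs_nonneg _)
  have h3 : (∑ x, max (P' x - P x) 0) * (Real.log (1/ε) - 1) ≤ ε * (Real.log (1/ε) - 1) :=
    mul_le_mul_of_nonneg_right h2 (by linarith)
  have h4 : Real.log (1/ε) ≤ Real.log (3*c) := by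
    apply Real.log_le_log (by positivity)
    rw [div_le_iff₀ hε] at *
    nlinarith
  nlinarith

section helpers
variable {d : Type} [Fintype d] [DecidableEq d]

private lemma trace_EEH_re_nonneg' {e : Type} [Fintype d] [Fintype e]
    (E : Matrix d e ℂ) : 0 ≤ ((E * Eᴴ).trace).re := by
  simp only [Matrix.trace, Matrix.diag, Matrix.mul_apply, Matrix.conjTranspose_apply]
  rw [Complex.re_sum]
  refine Finset.sum_nonneg fun i _ => ?_
  rw [Complex.re_sum]
  refine Finset.sum_nonneg fun j _ => ?_
  rw [Complex.star_def, Complex.mul_conj]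
  simp [Complex.normSq_nonneg]

open scoped MatrixOrder in
private lemma trace_mul_re_nonneg' {A B : Matrix d d ℂ} (hA : A.PosSemidef)
    (hB : B.PosSemidef) : 0 ≤ ((A * B).trace).re := by
  obtain ⟨C, rfl⟩ := CStarAlgebra.nonneg_iff_eq_star_mul_self.mp hA.nonneg
  obtain ⟨D, rfl⟩ := CStarAlgebra.nonneg_iff_eq_star_mul_self.mp hB.nonneg
  simp only [Matrix.star_eq_conjTranspose]
  have h1 : Cᴴ * C * (Dᴴ * D) = Cᴴ * (C * Dᴴ * D) := by
    simp only [Matrix.mul_assoc]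
  have h2 : ((Cᴴ * C * (Dᴴ * D)).trace) = (((C * Dᴴ) * (C * Dᴴ)ᴴ).trace) := by
    rw [h1, Matrix.trace_mul_comm]
    congr 1
    rw [Matrix.conjTranspose_mul, Matrix.conjTranspose_conjTranspose]
    simp only [Matrix.mul_assoc]
  rw [h2]
  exact trace_EEH_re_nonneg' _

private lemma one_sub_posSemidef' {ρ : Matrix d d ℂ} (h : IsState ρ) :
    ((1 : Matrix d d ℂ) - ρ).PosSemidef := by
  have hh := h.1.1
  have spec := hh.spectral_theorem
  set U : Matrix d d ℂ := (hh.eigenvectorUnitary : Matrix d d ℂ) with hUdef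
  have hUU : U * star U = 1 := (Matrix.mem_unitaryGroup_iff).mp hh.eigenvectorUnitary.2
  have hUU' : star U * U = 1 := (Matrix.mem_unitaryGroup_iff').mp hh.eigenvectorUnitary.2
  set D : Matrix d d ℂ := Matrix.diagonal (RCLike.ofReal ∘ hh.eigenvalues) with hDdef
  have htr : (∑ i, (hh.eigenvalues i : ℂ)) = 1 := by
    have hQ : ρ.trace = D.trace := by
      rw [spec, Unitary.conjStarAlgAut_apply, Matrix.trace_mul_cycle, hUU', Matrix.one_mul]
    rw [← h.2, hQ, hDdef, Matrix.trace_diagonal]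
    rfl
  have hsum : (∑ i, hh.eigenvalues i) = 1 := by
    have := htr
    push_cast at this
    exact_mod_cast this
  have hle : ∀ i, hh.eigenvalues i ≤ 1 := by
    intro i
    rw [← hsum]
    exact Finset.single_le_sum (fun j _ => h.1.eigenvalues_nonneg j) (Finset.mem_univ i)
  have key : 1 - ρ = U * Matrix.diagonal (fun i => ((1 - hh.eigenvalues i : ℝ) : ℂ)) * Uᴴ := by
    have hsub : Matrix.diagonal (fun i => ((1 - hh.eigenvalues i : ℝ) : ℂ)) = 1 - D := by
      rw [hDdef, ← Matrix.diagonal_one, Matrix.diagonal_sub]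
      congr 1
      funext i
      push_cast
      rfl
    rw [hsub, Matrix.mul_sub, Matrix.mul_one, Matrix.sub_mul,
      ← Matrix.star_eq_conjTranspose, hUU, spec, Unitary.conjStarAlgAut_apply]
  rw [key]
  refine Matrix.PosSemidef.mul_mul_conjTranspose_same (Matrix.PosSemidef.diagonal ?_) U
  intro i
  exact Complex.zero_le_real.mpr (by linarith [hle i])

private lemma mProb_nonneg' {ρ : Matrix d d ℂ} (hρ : ρ.PosSemidef)
    {X : Type} (M : X → Matrix d d ℂ) (hMx : ∀ x, (M x).PosSemidef) (x : X) :
    0 ≤ mProb M ρ x :=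
  trace_mul_re_nonneg' hρ (hMx x)

private lemma mProb_le_trace' {ρ : Matrix d d ℂ} (hρ : IsState ρ)
    {X : Type} (M : X → Matrix d d ℂ) (hMx : ∀ x, (M x).PosSemidef) (x : X) :
    mProb M ρ x ≤ ((M x).trace).re := by
  have h := trace_mul_re_nonneg' (one_sub_posSemidef' hρ) (hMx x)
  rw [Matrix.sub_mul, Matrix.one_mul, Matrix.trace_sub, Complex.sub_re] at h
  unfold mProb
  linarith

private lemma mProb_sum' {ρ : Matrix d d ℂ} (hρ : IsState ρ)
    {X : Type} [Fintype X] (M : X → Matrix d d ℂ) (hM2 : (∑ x, M x) = 1) :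
    ∑ x, mProb M ρ x = 1 := by
  unfold mProb
  rw [← Complex.re_sum, ← Matrix.trace_sum, ← Finset.mul_sum, hM2, Matrix.mul_one,
    hρ.2, Complex.one_re]

private lemma q_lower' {σ : Matrix d d ℂ} {c : ℝ}
    (hσε : (σ - ((c : ℝ) : ℂ) • (1 : Matrix d d ℂ)).PosSemidef)
    {X : Type} (M : X → Matrix d d ℂ) (hMx : ∀ x, (M x).PosSemidef) (x : X) :
    c * ((M x).trace).re ≤ mProb M σ x := by
  have h := trace_mul_re_nonneg' hσε (hMx x)
  rw [Matrix.sub_mul, Matrix.smul_mul, Matrix.one_mul, Matrix.trace_sub, Matrix.trace_smul,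
    Complex.sub_re, smul_eq_mul, Complex.re_ofReal_mul] at h
  unfold mProb
  linarith

private lemma nonempty_of_isState' {ρ : Matrix d d ℂ} (h : IsState ρ) : Nonempty d := by
  by_contra hne
  rw [not_nonempty_iff] at hne
  have h2 := h.2
  rw [Matrix.trace] at h2
  simp [Finset.univ_eq_empty] at h2

end helpers

private lemma half {d : Type} [Fintype d] [DecidableEq d]
    (ρ ρ' σ : Matrix d d ℂ) (hρ : IsState ρ) (hρ' : IsState ρ') (hσ : IsState σ)
    (ε : ℝ)
    (hσε : (σ - (((ε / (Fintype.card d : ℝ)) : ℝ) : ℂ) • (1 : Matrix d d ℂ)).PosSemidef)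
    {m : ℕ} (M : Fin m → Matrix d d ℂ) (hM : IsPOVM M)
    (hdist : ∑ x, |mProb M ρ x - mProb M ρ' x| ≤ ε) (hε : ε ≤ (Real.exp 1)⁻¹) :
    klDiv2 (mProb M ρ) (mProb M σ) ≤ klDiv2 (mProb M ρ') (mProb M σ) +
        ENNReal.ofReal (2 * ε * Real.logb 2 (3 * (Fintype.card d : ℝ) / ε)) := by
  have hε0 : 0 ≤ ε :=
    le_trans (Finset.sum_nonneg fun x _ => abs_nonneg _) hdist
  rcases eq_or_lt_of_le hε0 with hez | hεpos
  · -- ε = 0 : the two distributions coincide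
    have hPP : mProb M ρ = mProb M ρ' := by
      funext x
      have hsum0 : ∑ x, |mProb M ρ x - mProb M ρ' x| = 0 :=
        le_antisymm (by rw [hez]; exact hdist) (Finset.sum_nonneg fun x _ => abs_nonneg _)
      have := (Finset.sum_eq_zero_iff_of_nonneg (fun x _ => abs_nonneg _)).mp hsum0 x
        (Finset.mem_univ x)
      have := abs_eq_zero.mp this
      linarith
    rw [hPP]
    exact le_self_add
  haveI : Nonempty d := nonempty_of_isState' hρ
  set k : ℝ := (Fintype.card d : ℝ) with hk
  have hk0 : 0 < k := by
    rw [hk]; exact_mod_cast Fintype.card_pos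
  set P := mProb M ρ
  set P' := mProb M ρ'
  set Q := mProb M σ
  have hMx := hM.1
  have hP : ∀ x, 0 ≤ P x := mProb_nonneg' hρ.1 M hMx
  have hP' : ∀ x, 0 ≤ P' x := mProb_nonneg' hρ'.1 M hMx
  have hPle : ∀ x, P x ≤ ((M x).trace).re := mProb_le_trace' hρ M hMx
  have hP'le : ∀ x, P' x ≤ ((M x).trace).re := mProb_le_trace' hρ' M hMx
  have hQlow : ∀ x, (ε/k) * ((M x).trace).re ≤ Q x := q_lower' hσε M hMx
  have hcpos : 0 < k/ε := by positivity
  have hPQ : ∀ x, P x ≤ (k/ε) * Q x := by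
    intro x
    have h1 : (k/ε) * ((ε/k) * ((M x).trace).re) ≤ (k/ε) * Q x :=
      mul_le_mul_of_nonneg_left (hQlow x) hcpos.le
    have h2 : (k/ε) * ((ε/k) * ((M x).trace).re) = ((M x).trace).re := by
      field_simp
    linarith [hPle x]
  have hP'Q : ∀ x, P' x ≤ (k/ε) * Q x := by
    intro x
    have h1 : (k/ε) * ((ε/k) * ((M x).trace).re) ≤ (k/ε) * Q x :=
      mul_le_mul_of_nonneg_left (hQlow x) hcpos.le
    have h2 : (k/ε) * ((ε/k) * ((M x).trace).re) = ((M x).trace).re := by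
      field_simp
    linarith [hP'le x]
  have hQ1 : ∑ x, Q x = 1 := mProb_sum' hσ M hM.2
  have hsupp : ∀ x, Q x = 0 → P x = 0 := by
    intro x hx
    have h1 := hQlow x
    rw [hx] at h1
    have h2 : ((M x).trace).re ≤ 0 := by
      by_contra h3
      push_neg at h3
      have h4 : 0 < ε/k := by positivity
      nlinarith
    linarith [hP x, hPle x]
  have hsupp' : ∀ x, Q x = 0 → P' x = 0 := by
    intro x hx
    have h1 := hQlow x
    rw [hx] at h1
    have h2 : ((M x).trace).re ≤ 0 := by
      by_contra h3
      push_neg at h3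
      have h4 : 0 < ε/k := by positivity
      nlinarith
    linarith [hP' x, hP'le x]
  have hk1 : 1 ≤ k := by
    rw [hk]
    exact_mod_cast Fintype.card_pos
  have hcore := core P P' Q ε (k/ε) hP hP' hPQ hP'Q hQ1 hdist hεpos hε
    (by apply div_le_div_of_nonneg_right ?_ hεpos.le; exact hk1)
  -- convert natural log statement to logb 2
  have hL : 0 < Real.log 2 := Real.log_pos one_lt_two
  have hreal : ∑ x, P x * Real.logb 2 (P x / Q x) ≤
      (∑ x, P' x * Real.logb 2 (P' x / Q x)) + 2 * ε * Real.logb 2 (3 * k / ε) := by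
    have h3c : 3 * k / ε = 3 * (k/ε) := by ring
    have conv1 : ∀ (f g : Fin m → ℝ), ∑ x, f x * Real.logb 2 (g x)
        = (∑ x, f x * Real.log (g x)) / Real.log 2 := by
      intro f g
      rw [Finset.sum_div]
      refine Finset.sum_congr rfl fun x _ => ?_
      rw [Real.logb, mul_div_assoc]
    rw [conv1 P (fun x => P x / Q x), conv1 P' (fun x => P' x / Q x), h3c, Real.logb,
      ← mul_div_assoc, ← add_div]
    exact div_le_div_of_nonneg_right (by linarith [hcore]) hL.le
  rw [QIT.klDiv2, if_pos hsupp, QIT.klDiv2, if_pos hsupp']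
  exact le_trans (ENNReal.ofReal_le_ofReal hreal) (ENNReal.ofReal_add_le)


/-- Continuity of the measured relative entropy against a state with smallest
eigenvalue at least ε/k. -/
theorem measured_relEnt_continuity {d : Type} [Fintype d] [DecidableEq d]
    (ρ ρ' σ : Matrix d d ℂ) (hρ : IsState ρ) (hρ' : IsState ρ') (hσ : IsState σ)
    (ε : ℝ)
    (hσε : (σ - (((ε / (Fintype.card d : ℝ)) : ℝ) : ℂ) • (1 : Matrix d d ℂ)).PosSemidef)
    {m : ℕ} (M : Fin m → Matrix d d ℂ) (hM : IsPOVM M)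
    (hdist : ∑ x, |mProb M ρ x - mProb M ρ' x| ≤ ε) (hε : ε ≤ (Real.exp 1)⁻¹) :
    klDiv2 (mProb M ρ) (mProb M σ) ≤ klDiv2 (mProb M ρ') (mProb M σ) +
        ENNReal.ofReal (2 * ε * Real.logb 2 (3 * (Fintype.card d : ℝ) / ε)) ∧
    klDiv2 (mProb M ρ') (mProb M σ) ≤ klDiv2 (mProb M ρ) (mProb M σ) +
        ENNReal.ofReal (2 * ε * Real.logb 2 (3 * (Fintype.card d : ℝ) / ε)) := by
  have hdist' : ∑ x, |mProb M ρ' x - mProb M ρ x| ≤ ε := by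
    have habs : ∀ x : Fin m, |mProb M ρ' x - mProb M ρ x| = |mProb M ρ x - mProb M ρ' x| :=
      fun x => abs_sub_comm _ _
    rw [Finset.sum_congr rfl fun x _ => habs x]
    exact hdist
  exact ⟨half ρ ρ' σ hρ hρ' hσ ε hσε M hM hdist hε,
         half ρ' ρ σ hρ' hρ hσ ε hσε M hM hdist' hε⟩
end
end

section
/- Let M be any set of measurements on a quantum system of Hilbert space dimension k, G a set of states on that system, τ = I/k the maximally mixed state, and for 0 < x ≤ 1 let G_x := { xσ + (1−x)τ : σ ∈ G }. If G is star-shaped with respect to τ (so that G_x ⊆ G), then for every state ρ: E^{(G)}_{r,M}(ρ) ≤ E^{(G_x)}_{r,M}(ρ) ≤ E^{(G)}_{r,M}(ρ) − log x. -/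
open Matrix Filter
open scoped Kronecker ENNReal Classical ComplexOrder

noncomputable section

namespace QIT

lemma psd_diag_re_nonneg {d : Type} [Fintype d] [DecidableEq d] {M : Matrix d d ℂ}
    (h : M.PosSemidef) (i : d) : 0 ≤ (M i i).re := by
  have h2 : 0 ≤ M i i := h.diag_nonneg
  exact (Complex.le_def.mp h2).1

lemma psd_trace_re_nonneg {d : Type} [Fintype d] [DecidableEq d] {M : Matrix d d ℂ}
    (h : M.PosSemidef) : 0 ≤ M.trace.re := by
  rw [Matrix.trace, Complex.re_sum]
  exact Finset.sum_nonneg fun i _ => psd_diag_re_nonneg h i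

open scoped MatrixOrder in
lemma trace_mul_psd_re_nonneg {d : Type} [Fintype d] [DecidableEq d]
    {A B : Matrix d d ℂ} (hA : A.PosSemidef) (hB : B.PosSemidef) :
    0 ≤ ((A * B).trace).re := by
  have hs : CFC.sqrt A * CFC.sqrt A = A := CFC.sqrt_mul_sqrt_self A hA.nonneg
  have : (A * B).trace = (CFC.sqrt A * B * (CFC.sqrt A)ᴴ).trace := by
    rw [(CFC.sqrt_nonneg A).posSemidef.isHermitian.eq,
      Matrix.trace_mul_comm (CFC.sqrt A * B) (CFC.sqrt A), ← Matrix.mul_assoc, hs]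
  rw [this]
  exact psd_trace_re_nonneg (hB.mul_mul_conjTranspose_same (CFC.sqrt A))

lemma mProb_nonneg {d X : Type} [Fintype d] [DecidableEq d] {M : X → Matrix d d ℂ}
    {ρ : Matrix d d ℂ} (hρ : ρ.PosSemidef) (hM : ∀ x, (M x).PosSemidef) (x : X) :
    0 ≤ mProb M ρ x :=
  trace_mul_psd_re_nonneg hρ (hM x)

lemma mProb_sum_one {d X : Type} [Fintype d] [DecidableEq d] [Fintype X]
    {M : X → Matrix d d ℂ} {ρ : Matrix d d ℂ} (hρ : IsState ρ) (hM : (∑ x, M x) = 1) :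
    ∑ x, mProb M ρ x = 1 := by
  unfold mProb
  rw [← Complex.re_sum, ← Matrix.trace_sum, ← Finset.mul_sum, hM, Matrix.mul_one, hρ.2]
  simp

lemma mProb_maxMixed_nonneg {d X : Type} [Fintype d] [DecidableEq d]
    {M : X → Matrix d d ℂ} (hM : ∀ x, (M x).PosSemidef) (x : X) :
    0 ≤ mProb M (maxMixed d) x := by
  unfold mProb maxMixed
  rw [Matrix.smul_mul, Matrix.one_mul, Matrix.trace_smul, smul_eq_mul,
    show ((Fintype.card d : ℂ))⁻¹ = (((Fintype.card d : ℝ)⁻¹ : ℝ) : ℂ) by push_cast; ring,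
    Complex.re_ofReal_mul]
  exact mul_nonneg (by positivity) (psd_trace_re_nonneg (hM x))

lemma mProb_combo {d X : Type} [Fintype d] {M : X → Matrix d d ℂ}
    (σ τ : Matrix d d ℂ) (x c : ℝ) (i : X) :
    mProb M ((x : ℂ) • σ + (c : ℂ) • τ) i = x * mProb M σ i + c * mProb M τ i := by
  unfold mProb
  rw [Matrix.add_mul, Matrix.smul_mul, Matrix.smul_mul, Matrix.trace_add,
    Matrix.trace_smul, Matrix.trace_smul, Complex.add_re, smul_eq_mul, smul_eq_mul,
    Complex.re_ofReal_mul, Complex.re_ofReal_mul]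

lemma klDiv2_combo_le {X : Type} [Fintype X] (P Q T : X → ℝ)
    (hP : ∀ i, 0 ≤ P i) (hPsum : ∑ i, P i = 1) (hQ : ∀ i, 0 ≤ Q i) (hT : ∀ i, 0 ≤ T i)
    (x : ℝ) (hx0 : 0 < x) (hx1 : x ≤ 1) :
    klDiv2 P (fun i => x * Q i + (1 - x) * T i) ≤
      klDiv2 P Q + ENNReal.ofReal (-(Real.logb 2 x)) := by
  by_cases hsupp : ∀ i, Q i = 0 → P i = 0
  · have hsupp' : ∀ i, x * Q i + (1 - x) * T i = 0 → P i = 0 := by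
      intro i h
      have hq : Q i = 0 := by nlinarith [hQ i, hT i]
      exact hsupp i hq
    rw [klDiv2, if_pos hsupp', klDiv2, if_pos hsupp]
    refine le_trans ?_ (ENNReal.ofReal_add_le)
    apply ENNReal.ofReal_le_ofReal
    have key : ∀ i, P i * Real.logb 2 (P i / (x * Q i + (1 - x) * T i)) ≤
        P i * Real.logb 2 (P i / Q i) + P i * (-(Real.logb 2 x)) := by
      intro i
      rcases eq_or_lt_of_le (hP i) with h0 | hPi
      · simp [← h0]
      have hQi : 0 < Q i := by
        rcases eq_or_lt_of_le (hQ i) with h0 | h; · exact absurd (hsupp i h0.symm) (by linarith)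
        exact h
      have hQ'pos : 0 < x * Q i + (1 - x) * T i := by nlinarith [hT i]
      have h1 : Real.logb 2 (P i / (x * Q i + (1 - x) * T i)) ≤
          Real.logb 2 (P i / (x * Q i)) := by
        apply Real.logb_le_logb_of_le (by norm_num) (by positivity)
        apply div_le_div_of_nonneg_left (hP i) (by positivity)
        nlinarith [hT i]
      have h2 : Real.logb 2 (P i / (x * Q i)) =
          Real.logb 2 (P i / Q i) + (-(Real.logb 2 x)) := by
        rw [show P i / (x * Q i) = P i / Q i / x by rw [mul_comm, ← div_div],
          Real.logb_div (by positivity) (ne_of_gt hx0)]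
        ring
      have := h1.trans_eq h2
      nlinarith [hP i]
    calc ∑ i, P i * Real.logb 2 (P i / (x * Q i + (1 - x) * T i))
        ≤ ∑ i, (P i * Real.logb 2 (P i / Q i) + P i * (-(Real.logb 2 x))) :=
          Finset.sum_le_sum fun i _ => key i
      _ = (∑ i, P i * Real.logb 2 (P i / Q i)) + (-(Real.logb 2 x)) := by
          rw [Finset.sum_add_distrib, ← Finset.sum_mul, hPsum, one_mul]
  · have h2 : klDiv2 P Q = ⊤ := by rw [klDiv2, if_neg hsupp]
    simp [h2]

end QIT

open QIT

variable {dA dB dE : Type} [Fintype dA] [DecidableEq dA] [Fintype dB] [DecidableEq dB]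
  [Fintype dE] [DecidableEq dE]

/-- Eq. (12): comparing E^{(G)}_{r,M} and E^{(G_x)}_{r,M} for the shrunken set
G_x = xG + (1−x)τ of a star-shaped set G:
E^{(G)}_{r,M}(ρ) ≤ E^{(G_x)}_{r,M}(ρ) ≤ E^{(G)}_{r,M}(ρ) − log x. -/
theorem ErG_shrunken {d : Type} [Fintype d] [DecidableEq d]
    (Ms : Set (Σ m : ℕ, Fin m → Matrix d d ℂ)) (hMs : ∀ M ∈ Ms, IsPOVM M.2)
    (G : Set (Matrix d d ℂ)) (hG : ∀ σ ∈ G, IsState σ)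
    (hstar : ∀ σ ∈ G, ∀ p : ℝ, 0 ≤ p → p ≤ 1 →
        ((p : ℂ) • σ + (((1 - p : ℝ)) : ℂ) • maxMixed d) ∈ G)
    (x : ℝ) (hx0 : 0 < x) (hx1 : x ≤ 1)
    (ρ : Matrix d d ℂ) (hρ : IsState ρ) :
    ErG G Ms ρ ≤
        ErG ((fun σ => (x : ℂ) • σ + (((1 - x : ℝ)) : ℂ) • maxMixed d) '' G) Ms ρ ∧
    ErG ((fun σ => (x : ℂ) • σ + (((1 - x : ℝ)) : ℂ) • maxMixed d) '' G) Ms ρ ≤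
        ErG G Ms ρ + ENNReal.ofReal (-(Real.logb 2 x)) := by
  constructor
  · refine le_iInf₂ fun σ' hσ' => ?_
    obtain ⟨σ, hσ, rfl⟩ := hσ'
    exact iInf₂_le _ (hstar σ hσ x hx0.le hx1)
  · simp only [ErG, ENNReal.iInf_add]
    refine le_iInf₂ fun σ hσ => ?_
    refine le_trans (iInf₂_le ((x : ℂ) • σ + (((1 - x : ℝ)) : ℂ) • maxMixed d)
      ⟨σ, hσ, rfl⟩) ?_
    refine iSup₂_le fun M hM => ?_
    have hPOVM := hMs M hM
    have hQ : ∀ i, 0 ≤ mProb M.2 σ i := mProb_nonneg (hG σ hσ).1 hPOVM.1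
    have hT : ∀ i, 0 ≤ mProb M.2 (maxMixed d) i := mProb_maxMixed_nonneg hPOVM.1
    have hPn : ∀ i, 0 ≤ mProb M.2 ρ i := mProb_nonneg hρ.1 hPOVM.1
    have hPs : ∑ i, mProb M.2 ρ i = 1 := mProb_sum_one hρ hPOVM.2
    have hcombo : mProb M.2 ((x : ℂ) • σ + (((1 - x : ℝ)) : ℂ) • maxMixed d) =
        fun i => x * mProb M.2 σ i + (1 - x) * mProb M.2 (maxMixed d) i := by
      funext i; exact mProb_combo σ (maxMixed d) x (1 - x) i
    rw [hcombo]
    refine le_trans (klDiv2_combo_le _ _ _ hPn hPs hQ hT x hx0 hx1) ?_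
    exact add_le_add_left (le_iSup₂ (f := fun M (_ : M ∈ Ms) =>
      klDiv2 (mProb M.2 ρ) (mProb M.2 σ)) M hM) _
end
end
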